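/- arXiv:2410.04459 — 3 statements merged into one kernel-verified Lean document; each statement's English description precedes it below -/
import Mathlib

section
/- If U: ℝ → ℝ is finite-valued, continuous, non-decreasing, bounded from above, lim_{w→−∞} U(w) = −∞, and P(Z > 0) > 0, then the supremum sup_{x∈ℝ^d} E[U(W(x))] is finite and attained: there exists a portfolio x₀ ∈ ℝ^d with finite Euclidean norm such that E[U(W(x₀))] = sup_{x∈ℝ^d} E[U(W(x))]. -/
open MeasureTheory ProbabilityTheory Filter Matrix
open scoped ENNReal NNReal Topology

noncomputable section

/-- Signed expectation with values in `EReal`. -/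
def eexp {Ω : Type*} [MeasurableSpace Ω] (P : Measure Ω) (f : Ω → ℝ) : EReal :=
  ((∫⁻ ω, ENNReal.ofReal (f ω) ∂P : ℝ≥0∞) : EReal) -
    ((∫⁻ ω, ENNReal.ofReal (-(f ω)) ∂P : ℝ≥0∞) : EReal)

/-- NMVM return vector `X = μ + γ Z + √Z A N`. -/
def nmvmX {Ω : Type*} {d : ℕ} (μ γ : Fin d → ℝ) (A : Matrix (Fin d) (Fin d) ℝ)
    (Z : Ω → ℝ) (N : Ω → Fin d → ℝ) (ω : Ω) : Fin d → ℝ :=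
  fun i => μ i + γ i * Z ω + Real.sqrt (Z ω) * (A *ᵥ N ω) i

/-- Next-period wealth `W(x) = W₀(1+r_f) + W₀ xᵀ(X − 𝟏 r_f)` of portfolio `x`. -/
def wealth {Ω : Type*} {d : ℕ} (μ γ : Fin d → ℝ) (A : Matrix (Fin d) (Fin d) ℝ)
    (Z : Ω → ℝ) (N : Ω → Fin d → ℝ) (rf W0 : ℝ) (x : Fin d → ℝ) (ω : Ω) : ℝ :=
  W0 * (1 + rf) + W0 * ∑ i, x i * (nmvmX μ γ A Z N ω i - rf)

lemma wealth_eq {Ω : Type*} {d : ℕ} (μ γ : Fin d → ℝ) (A : Matrix (Fin d) (Fin d) ℝ)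
    (Z : Ω → ℝ) (N : Ω → Fin d → ℝ) (rf W0 : ℝ) (x : Fin d → ℝ) (ω : Ω) :
    wealth μ γ A Z N rf W0 x ω = W0 * (1 + rf) +
      W0 * ((∑ i, x i * (μ i - rf)) + (∑ i, x i * γ i) * Z ω +
        Real.sqrt (Z ω) * ∑ j, (∑ i, A i j * x i) * N ω j) := by
  unfold wealth nmvmX
  congr 1
  congr 1
  have h1 : ∀ i : Fin d, x i * (μ i + γ i * Z ω + Real.sqrt (Z ω) * (A *ᵥ N ω) i - rf)
      = x i * (μ i - rf) + (x i * γ i) * Z ω + Real.sqrt (Z ω) * (x i * (A *ᵥ N ω) i) :=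
    fun i => by ring
  rw [Finset.sum_congr rfl fun i _ => h1 i, Finset.sum_add_distrib, Finset.sum_add_distrib,
    ← Finset.sum_mul, ← Finset.mul_sum]
  congr 1
  congr 1
  simp only [Matrix.mulVec, dotProduct, Finset.mul_sum]
  rw [Finset.sum_comm]
  refine Finset.sum_congr rfl fun j _ => ?_
  rw [Finset.sum_mul]
  exact Finset.sum_congr rfl fun i _ => by ring

lemma quad_eq {d : ℕ} (A : Matrix (Fin d) (Fin d) ℝ) (x : Fin d → ℝ) :
    dotProduct (star x) ((A * Aᵀ) *ᵥ x) = ∑ j, (∑ i, A i j * x i) ^ 2 := by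
  rw [star_trivial, ← Matrix.mulVec_mulVec, Matrix.dotProduct_mulVec, ← Matrix.mulVec_transpose]
  simp only [dotProduct, Matrix.mulVec, Matrix.transpose_apply]
  exact Finset.sum_congr rfl fun j _ => by rw [sq]



lemma exists_min_ennreal {X : Type*} [PseudoMetricSpace X] {s : Set X} (hs : IsCompact s)
    (hne : s.Nonempty) (f : X → ℝ≥0∞)
    (hf : ∀ (u : ℕ → X) (x : X), (∀ n, u n ∈ s) → Tendsto u atTop (𝓝 x) →
      f x ≤ liminf (fun n => f (u n)) atTop) :
    ∃ x₀ ∈ s, ∀ x ∈ s, f x₀ ≤ f x := by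
  set m := ⨅ x ∈ s, f x with hm
  have hmle : ∀ x ∈ s, m ≤ f x := fun x hx => iInf₂_le x hx
  by_cases htop : m = ⊤
  · obtain ⟨x₀, hx₀⟩ := hne
    exact ⟨x₀, hx₀, fun x hx => le_top.trans (htop ▸ hmle x hx)⟩
  · have h1 : ∀ n : ℕ, ∃ x, x ∈ s ∧ f x < m + ((n : ℝ≥0∞) + 1)⁻¹ := by
      intro n
      have hlt : m < m + ((n : ℝ≥0∞) + 1)⁻¹ :=
        ENNReal.lt_add_right htop (ENNReal.inv_ne_zero.2 (by simp [ENNReal.add_eq_top]))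
      rw [hm, iInf_lt_iff] at hlt
      obtain ⟨x, hx⟩ := hlt
      rw [iInf_lt_iff] at hx
      obtain ⟨hxs, hfx⟩ := hx
      exact ⟨x, hxs, hfx⟩
    choose u hus hu using h1
    obtain ⟨x₀, hx₀s, φ, hφ, hconv⟩ := hs.tendsto_subseq hus
    refine ⟨x₀, hx₀s, fun x hx => ?_⟩
    have h2 : f x₀ ≤ m := by
      refine (hf (u ∘ φ) x₀ (fun n => hus _) hconv).trans ?_
      have hle : liminf (fun n => f (u (φ n))) atTop ≤
          liminf (fun n => m + ((φ n : ℝ≥0∞) + 1)⁻¹) atTop :=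
        liminf_le_liminf (Eventually.of_forall fun n => (hu (φ n)).le)
      have ht0 : Tendsto (fun n : ℕ => ((n : ℝ≥0∞) + 1)⁻¹) atTop (𝓝 0) := by
        have h := ENNReal.tendsto_inv_nat_nhds_zero.comp (tendsto_add_atTop_nat 1)
        convert h using 2 with n
        simp [Function.comp]
      have ht : Tendsto (fun n => m + ((φ n : ℝ≥0∞) + 1)⁻¹) atTop (𝓝 m) := by
        have := (ht0.comp hφ.tendsto_atTop).const_add m
        simpa using this
      exact hle.trans ht.liminf_eq.le
    exact h2.trans (hmle x hx)

instance gaussOpenPos : (gaussianReal 0 1).IsOpenPosMeasure := by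
  constructor
  intro U hU hne h0
  have h := gaussianReal_absolutelyContinuous' 0 (v := 1) one_ne_zero h0
  exact (hU.measure_pos volume hne).ne' h

lemma measurableSet_halfspace {d : ℕ} (u : Fin d → ℝ) (t : ℝ) :
    MeasurableSet {n : Fin d → ℝ | ∑ i, u i * n i < t} := by
  have hm : Measurable fun n : Fin d → ℝ => ∑ i, u i * n i :=
    Finset.measurable_sum _ fun i _ => by fun_prop
  exact hm measurableSet_Iio

lemma gaussian_halfspace_bound {d : ℕ} (hd : 0 < d) (T : ℝ) :
    ∃ δ₁ : ℝ≥0∞, 0 < δ₁ ∧ δ₁ ≠ ⊤ ∧ ∀ u : Fin d → ℝ, (∑ i, u i ^ 2) = 1 →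
      δ₁ ≤ (Measure.pi fun _ : Fin d => gaussianReal 0 1) {n | ∑ i, u i * n i < -T} := by
  set Q := Measure.pi fun _ : Fin d => gaussianReal 0 1 with hQ
  set S : Set (Fin d → ℝ) := {u | ∑ i, u i ^ 2 = 1} with hS
  set g : (Fin d → ℝ) → ℝ≥0∞ := fun u => Q {n | ∑ i, u i * n i < -T} with hg
  -- S is compact
  have hScl : IsClosed S := by
    have : Continuous fun u : Fin d → ℝ => ∑ i, u i ^ 2 :=
      continuous_finset_sum _ fun i _ => (continuous_apply i).pow 2
    exact isClosed_eq this continuous_const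
  have hSsub : S ⊆ Metric.closedBall 0 1 := by
    intro u hu
    rw [Metric.mem_closedBall, dist_zero_right]
    rw [pi_norm_le_iff_of_nonneg zero_le_one]
    intro i
    have h1 : u i ^ 2 ≤ 1 := by
      have := Finset.single_le_sum (f := fun i => u i ^ 2)
        (fun j _ => sq_nonneg (u j)) (Finset.mem_univ i)
      rw [hu] at this; exact this
    rw [Real.norm_eq_abs]
    nlinarith [abs_nonneg (u i), sq_abs (u i)]
  have hScomp : IsCompact S :=
    (isCompact_closedBall (0 : Fin d → ℝ) 1).of_isClosed_subset hScl hSsub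
  have hSne : S.Nonempty := by
    refine ⟨Pi.single ⟨0, hd⟩ 1, ?_⟩
    simp only [hS, Set.mem_setOf_eq, Pi.single_apply]
    have hc : ∀ i : Fin d, ((if i = ⟨0, hd⟩ then (1:ℝ) else 0))^2 = if i = ⟨0, hd⟩ then 1 else 0 :=
      fun i => by split <;> norm_num
    rw [Finset.sum_congr rfl fun i _ => hc i, Finset.sum_ite_eq']
    simp
  -- lower semicontinuity of g on sequences
  have hlsc : ∀ (us : ℕ → Fin d → ℝ) (u : Fin d → ℝ), (∀ n, us n ∈ S) →
      Tendsto us atTop (𝓝 u) → g u ≤ liminf (fun n => g (us n)) atTop := by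
    intro us u _ hconv
    set Fk : ℕ → (Fin d → ℝ) → ℝ≥0∞ :=
       fun k => ({n | ∑ i, us k i * n i < -T}).indicator 1 with hFk
    have hFmeas : ∀ k, Measurable (Fk k) := fun k =>
      (measurable_one).indicator (measurableSet_halfspace _ _)
    have hpt : ∀ n : Fin d → ℝ, ({n | ∑ i, u i * n i < -T}).indicator 1 n ≤
        liminf (fun k => Fk k n) atTop := by
      intro n
      by_cases hn : n ∈ {n : Fin d → ℝ | ∑ i, u i * n i < -T}
      · rw [Set.indicator_of_mem hn]
        have htd : Tendsto (fun k => ∑ i, us k i * n i) atTop (𝓝 (∑ i, u i * n i)) := by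
          refine tendsto_finset_sum _ fun i _ => ?_
          exact (Tendsto.mul ((tendsto_pi_nhds.1 hconv) i) tendsto_const_nhds)
        have hev : ∀ᶠ k in atTop, (1 : ℝ≥0∞) ≤ Fk k n := by
          filter_upwards [htd.eventually (eventually_lt_nhds hn)] with k hk
          have hmem : n ∈ {n : Fin d → ℝ | ∑ i, us k i * n i < -T} := hk
          rw [hFk]
          simp [Set.indicator_of_mem hmem]
        calc (1 : (Fin d → ℝ) → ℝ≥0∞) n = 1 := rfl
        _ ≤ liminf (fun k => Fk k n) atTop := le_liminf_of_le (by isBoundedDefault) hev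
      · rw [Set.indicator_of_notMem hn]; exact zero_le
    calc g u = ∫⁻ n, ({n | ∑ i, u i * n i < -T}).indicator 1 n ∂Q :=
          (lintegral_indicator_one (measurableSet_halfspace _ _)).symm
      _ ≤ ∫⁻ n, liminf (fun k => Fk k n) atTop ∂Q := lintegral_mono hpt
      _ ≤ liminf (fun k => ∫⁻ n, Fk k n ∂Q) atTop := lintegral_liminf_le hFmeas
      _ = liminf (fun k => g (us k)) atTop := by
          refine liminf_congr (Eventually.of_forall fun k => ?_)
          rw [hFk, lintegral_indicator_one (measurableSet_halfspace _ _)]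
  obtain ⟨u₀, hu₀S, hmin⟩ := exists_min_ennreal hScomp hSne g hlsc
  refine ⟨g u₀, ?_, measure_ne_top Q _, fun u hu => hmin u hu⟩
  -- positivity
  have hopen : IsOpen {n : Fin d → ℝ | ∑ i, u₀ i * n i < -T} := by
    have : Continuous fun n : Fin d → ℝ => ∑ i, u₀ i * n i :=
      continuous_finset_sum _ fun i _ => continuous_const.mul (continuous_apply i)
    exact isOpen_lt this continuous_const
  have hne2 : {n : Fin d → ℝ | ∑ i, u₀ i * n i < -T}.Nonempty := by
    refine ⟨(-(T + 1)) • u₀, ?_⟩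
    simp only [Set.mem_setOf_eq, Pi.smul_apply, smul_eq_mul]
    have : ∑ i, u₀ i * (-(T + 1) * u₀ i) = -(T + 1) * ∑ i, u₀ i ^ 2 := by
      rw [Finset.mul_sum]; exact Finset.sum_congr rfl fun i _ => by ring
    rw [this, hu₀S]
    linarith
  exact (hopen.measure_pos Q hne2)

lemma enn_coe_ereal {a : ℝ≥0∞} (h : a ≠ ⊤) : (a : EReal) = ((a.toReal : ℝ) : EReal) := by
  conv_lhs => rw [← ENNReal.ofReal_toReal h]
  rw [EReal.coe_ennreal_ofReal, max_eq_left]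
  exact_mod_cast ENNReal.toReal_nonneg

lemma eexp_eq_sub {Ω : Type*} [MeasurableSpace Ω] (P : Measure Ω) [IsProbabilityMeasure P]
    (f : Ω → ℝ) (hf : Measurable f) (M : ℝ) (hM0 : 0 ≤ M) (hfM : ∀ ω, f ω ≤ M) :
    eexp P f = ((ENNReal.ofReal M : ℝ≥0∞) : EReal) -
      ((∫⁻ ω, ENNReal.ofReal (M - f ω) ∂P : ℝ≥0∞) : EReal) := by
  set a := ∫⁻ ω, ENNReal.ofReal (f ω) ∂P with ha
  set b := ∫⁻ ω, ENNReal.ofReal (-(f ω)) ∂P with hb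
  set C := ∫⁻ ω, ENNReal.ofReal (M - f ω) ∂P with hC
  have hkey : C + a = ENNReal.ofReal M + b := by
    have hpt : ∀ ω, ENNReal.ofReal (M - f ω) + ENNReal.ofReal (f ω) =
        ENNReal.ofReal M + ENNReal.ofReal (-(f ω)) := by
      intro ω
      rcases le_or_gt 0 (f ω) with h | h
      · rw [ENNReal.ofReal_of_nonpos (by linarith : -(f ω) ≤ 0), add_zero,
          ← ENNReal.ofReal_add (by linarith [hfM ω] : 0 ≤ M - f ω) h]
        norm_num
      · rw [ENNReal.ofReal_of_nonpos h.le, add_zero,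
          ← ENNReal.ofReal_add hM0 (by linarith : 0 ≤ -(f ω)), sub_eq_add_neg]
    have h1 : C + a = ∫⁻ ω, (ENNReal.ofReal (M - f ω) + ENNReal.ofReal (f ω)) ∂P :=
      (lintegral_add_left ((measurable_const.sub hf).ennreal_ofReal) _).symm
    have h2 : ∫⁻ ω, (ENNReal.ofReal M + ENNReal.ofReal (-(f ω))) ∂P
        = ENNReal.ofReal M + b := by
      rw [lintegral_add_left measurable_const, lintegral_const, measure_univ, mul_one]
    rw [h1, lintegral_congr hpt, h2]
  have haM : a ≤ ENNReal.ofReal M := by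
    calc a ≤ ∫⁻ _, ENNReal.ofReal M ∂P := lintegral_mono fun ω => ENNReal.ofReal_le_ofReal (hfM ω)
    _ = ENNReal.ofReal M := by rw [lintegral_const, measure_univ, mul_one]
  have haT : a ≠ ⊤ := (haM.trans_lt ENNReal.ofReal_lt_top).ne
  rw [eexp, ← ha, ← hb]
  by_cases hbT : b = ⊤
  · have hCT : C = ⊤ := by
      by_contra hC'
      have : C + a ≠ ⊤ := ENNReal.add_ne_top.2 ⟨hC', haT⟩
      rw [hkey, hbT] at this
      simp [ENNReal.add_eq_top] at this
    rw [hbT, hCT]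
    rw [EReal.coe_ennreal_top, sub_eq_add_neg, sub_eq_add_neg, EReal.neg_top,
      EReal.add_bot, EReal.add_bot]
  · have hCT : C ≠ ⊤ := by
      intro hC'
      rw [hC', top_add] at hkey
      exact (ENNReal.add_ne_top.2 ⟨ENNReal.ofReal_ne_top, hbT⟩) hkey.symm
    have hreal : C.toReal + a.toReal = M + b.toReal := by
      have := congrArg ENNReal.toReal hkey
      rw [ENNReal.toReal_add hCT haT, ENNReal.toReal_add ENNReal.ofReal_ne_top hbT,
        ENNReal.toReal_ofReal hM0] at this
      exact this
    rw [enn_coe_ereal haT, enn_coe_ereal hbT, enn_coe_ereal hCT,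
      enn_coe_ereal ENNReal.ofReal_ne_top, ENNReal.toReal_ofReal hM0,
      ← EReal.coe_sub, ← EReal.coe_sub]
    exact_mod_cast (by linarith : a.toReal - b.toReal = M - C.toReal)



set_option maxHeartbeats 1000000 in
/-- if `U` is finite-valued, continuous, non-decreasing, bounded from above,
`U(w) → −∞` as `w → −∞`, and `P(Z > 0) > 0`, then `sup_x E[U(W(x))]` is finite and is
attained at some portfolio `x₀` of finite Euclidean norm. -/
theorem stmt17 {Ω : Type*} [MeasurableSpace Ω] (P : Measure Ω) [IsProbabilityMeasure P]
    {d : ℕ} (μ γ : Fin d → ℝ) (A : Matrix (Fin d) (Fin d) ℝ)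
    (Z : Ω → ℝ) (N : Ω → Fin d → ℝ)
    (hZmeas : Measurable Z) (hNmeas : Measurable N)
    (hZnonneg : ∀ ω, 0 ≤ Z ω)
    (hZposprob : 0 < P {ω | 0 < Z ω})
    (hNlaw : Measure.map N P = Measure.pi fun _ : Fin d => gaussianReal 0 1)
    (hindep : IndepFun Z N P)
    (hPD : (A * Aᵀ).PosDef)
    (rf W0 : ℝ) (hW0 : 0 < W0)
    (hμrf : (fun i => μ i - rf) ≠ 0)
    (U : ℝ → ℝ) (hUcont : Continuous U) (hUmono : Monotone U)
    (hUbdd : BddAbove (Set.range U)) (hUbot : Tendsto U atBot atBot) :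
    ∃ x₀ : Fin d → ℝ,
      (eexp P fun ω => U (wealth μ γ A Z N rf W0 x₀ ω)) ≠ ⊥ ∧
      (eexp P fun ω => U (wealth μ γ A Z N rf W0 x₀ ω)) ≠ ⊤ ∧
      ∀ x : Fin d → ℝ,
        (eexp P fun ω => U (wealth μ γ A Z N rf W0 x ω)) ≤
          eexp P fun ω => U (wealth μ γ A Z N rf W0 x₀ ω) := by
  classical
  have hd : 0 < d := by
    by_contra h
    have hd0 : d = 0 := by omega
    subst hd0
    exact hμrf (funext fun i => i.elim0)
  obtain ⟨M₀, hM₀⟩ := hUbdd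
  set M := max M₀ 0 with hM
  have hM0 : 0 ≤ M := le_max_right _ _
  have hUM : ∀ w, U w ≤ M := fun w => le_trans (hM₀ (Set.mem_range_self w)) (le_max_left _ _)
  have hfmeas : ∀ x : Fin d → ℝ, Measurable fun ω => U (wealth μ γ A Z N rf W0 x ω) := by
    intro x
    refine hUcont.measurable.comp ?_
    show Measurable fun ω => wealth μ γ A Z N rf W0 x ω
    simp only [wealth_eq]
    refine Measurable.const_add (Measurable.const_mul ?_ W0) _
    refine Measurable.add (Measurable.add measurable_const ((hZmeas.const_mul _))) ?_
    refine Measurable.mul (Real.continuous_sqrt.measurable.comp hZmeas) ?_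
    exact Finset.measurable_sum _ fun j _ => ((measurable_pi_apply j).comp hNmeas).const_mul _
  set L : (Fin d → ℝ) → ℝ≥0∞ :=
    fun x => ∫⁻ ω, ENNReal.ofReal (M - U (wealth μ γ A Z N rf W0 x ω)) ∂P with hLdef
  have heexp : ∀ x : Fin d → ℝ, (eexp P fun ω => U (wealth μ γ A Z N rf W0 x ω)) =
      ((ENNReal.ofReal M : ℝ≥0∞) : EReal) - ((L x : ℝ≥0∞) : EReal) := fun x =>
    eexp_eq_sub P _ (hfmeas x) M hM0 (fun ω => hUM _)
  have hwealth0 : ∀ ω : Ω, wealth μ γ A Z N rf W0 0 ω = W0 * (1 + rf) := fun ω => by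
    simp [wealth]
  have hL0 : L 0 = ENNReal.ofReal (M - U (W0 * (1 + rf))) := by
    rw [hLdef]
    simp only [hwealth0]
    rw [lintegral_const, measure_univ, mul_one]
  have hL0top : L 0 ≠ ⊤ := by rw [hL0]; exact ENNReal.ofReal_ne_top
  -- lower semicontinuity of L
  have hLlsc : ∀ (xs : ℕ → Fin d → ℝ) (x : Fin d → ℝ), Tendsto xs atTop (𝓝 x) →
      L x ≤ liminf (fun k => L (xs k)) atTop := by
    intro xs x hconv
    have hmeask : ∀ k, Measurable fun ω =>
        ENNReal.ofReal (M - U (wealth μ γ A Z N rf W0 (xs k) ω)) :=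
      fun k => (measurable_const.sub (hfmeas (xs k))).ennreal_ofReal
    have hpt : ∀ ω, Tendsto (fun k => ENNReal.ofReal (M - U (wealth μ γ A Z N rf W0 (xs k) ω)))
        atTop (𝓝 (ENNReal.ofReal (M - U (wealth μ γ A Z N rf W0 x ω)))) := by
      intro ω
      refine (ENNReal.continuous_ofReal.tendsto _).comp ?_
      refine Tendsto.const_sub M ?_
      refine (hUcont.tendsto _).comp ?_
      simp only [wealth_eq]
      refine Tendsto.const_add _ (Tendsto.const_mul _ ?_)
      refine Tendsto.add (Tendsto.add ?_ ?_) ?_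
      · exact tendsto_finset_sum _ fun i _ => ((tendsto_pi_nhds.1 hconv i).mul_const _)
      · exact (tendsto_finset_sum _ fun i _ => ((tendsto_pi_nhds.1 hconv i).mul_const _)).mul_const _
      · exact Tendsto.const_mul _ (tendsto_finset_sum _ fun j _ =>
          (tendsto_finset_sum _ fun i _ =>
            (Tendsto.const_mul _ (tendsto_pi_nhds.1 hconv i))).mul_const _)
    calc L x = ∫⁻ ω, liminf
          (fun k => ENNReal.ofReal (M - U (wealth μ γ A Z N rf W0 (xs k) ω))) atTop ∂P :=
        lintegral_congr fun ω => ((hpt ω).liminf_eq).symm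
      _ ≤ liminf (fun k => L (xs k)) atTop := lintegral_liminf_le hmeask
  -- coercivity
  have hcoer : ∃ R : ℝ, 1 ≤ R ∧ ∀ x : Fin d → ℝ, R ≤ ‖x‖ → L 0 < L x := by
    set Cb := ∑ i, |μ i - rf| with hCb
    set Cγ := ∑ i, |γ i| with hCγ
    have hCb0 : 0 ≤ Cb := Finset.sum_nonneg fun i _ => abs_nonneg _
    have hCγ0 : 0 ≤ Cγ := Finset.sum_nonneg fun i _ => abs_nonneg _
    obtain ⟨lam, hlam_pos, hlam⟩ : ∃ lam : ℝ, 0 < lam ∧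
        ∀ x : Fin d → ℝ, lam * ‖x‖ ^ 2 ≤ ∑ j, (∑ i, A i j * x i) ^ 2 := by
      have hqcont : Continuous fun x : Fin d → ℝ => ∑ j, (∑ i, A i j * x i) ^ 2 :=
        continuous_finset_sum _ fun j _ =>
          (continuous_finset_sum _ fun i _ => continuous_const.mul (continuous_apply i)).pow 2
      haveI : Nonempty (Fin d) := ⟨⟨0, hd⟩⟩
      have hsne : (Metric.sphere (0 : Fin d → ℝ) 1).Nonempty :=
        NormedSpace.sphere_nonempty.mpr zero_le_one
      obtain ⟨xm, hxm_mem, hxm_min⟩ :=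
        (isCompact_sphere (0 : Fin d → ℝ) 1).exists_isMinOn hsne hqcont.continuousOn
      have hxm_norm : ‖xm‖ = 1 := by simpa using hxm_mem
      have hxm_ne : xm ≠ 0 := by
        intro h; rw [h] at hxm_norm; simp at hxm_norm
      have hlam_pos : 0 < ∑ j, (∑ i, A i j * xm i) ^ 2 := by
        have h := hPD.dotProduct_mulVec_pos hxm_ne
        rwa [quad_eq] at h
      refine ⟨_, hlam_pos, fun x => ?_⟩
      by_cases hx : x = 0
      · subst hx; simp
      · have hxn : 0 < ‖x‖ := norm_pos_iff.2 hx
        have hmem : (‖x‖⁻¹ • x) ∈ Metric.sphere (0 : Fin d → ℝ) 1 := by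
          simp [norm_smul, abs_of_pos (inv_pos.2 hxn), inv_mul_cancel₀ hxn.ne']
        have h1 := hxm_min hmem
        simp only [Set.mem_setOf_eq] at h1
        have h2 : ∑ j, (∑ i, A i j * (‖x‖⁻¹ • x) i) ^ 2
            = (‖x‖⁻¹) ^ 2 * ∑ j, (∑ i, A i j * x i) ^ 2 := by
          rw [Finset.mul_sum]
          refine Finset.sum_congr rfl fun j _ => ?_
          have h3 : ∑ i, A i j * (‖x‖⁻¹ • x) i = ‖x‖⁻¹ * ∑ i, A i j * x i := by
            rw [Finset.mul_sum]
            exact Finset.sum_congr rfl fun i _ => by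
              simp only [Pi.smul_apply, smul_eq_mul]; ring
          rw [h3, mul_pow]
        rw [h2] at h1
        have h4 := mul_le_mul_of_nonneg_right h1 (sq_nonneg ‖x‖)
        calc (∑ j, (∑ i, A i j * xm i) ^ 2) * ‖x‖ ^ 2
            ≤ ((‖x‖⁻¹) ^ 2 * ∑ j, (∑ i, A i j * x i) ^ 2) * ‖x‖ ^ 2 := h4
          _ = ∑ j, (∑ i, A i j * x i) ^ 2 := by
              field_simp
    obtain ⟨k, hk⟩ : ∃ k : ℕ, P (Z ⁻¹' Set.Icc (1 / (k + 1) : ℝ) (k + 1)) ≠ 0 := by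
      by_contra h
      push_neg at h
      have hsub : {ω | 0 < Z ω} ⊆ ⋃ k : ℕ, Z ⁻¹' Set.Icc (1 / (k + 1) : ℝ) (k + 1) := by
        intro ω hω
        have hωpos : 0 < Z ω := hω
        obtain ⟨k, hk2⟩ := exists_nat_ge (max (1 / Z ω) (Z ω))
        refine Set.mem_iUnion.2 ⟨k, ?_⟩
        simp only [Set.mem_preimage, Set.mem_Icc]
        constructor
        · rw [div_le_iff₀ (by positivity)]
          have h5 : 1 / Z ω ≤ k := le_trans (le_max_left _ _) hk2
          rw [div_le_iff₀ hωpos] at h5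
          nlinarith
        · have := le_trans (le_max_right _ _) hk2
          linarith
      have hnull : P {ω | 0 < Z ω} = 0 :=
        measure_mono_null hsub (measure_iUnion_null fun k => h k)
      exact hZposprob.ne' hnull
    set z₀ : ℝ := 1 / (k + 1) with hz₀def
    set z₁ : ℝ := k + 1 with hz₁def
    have hz₀pos : (0 : ℝ) < z₀ := by positivity
    have hz₁pos : (0 : ℝ) < z₁ := by positivity
    set T := (1 + Cb + Cγ * z₁) / Real.sqrt (z₀ * lam) with hT
    have hsqz₀ : 0 < Real.sqrt z₀ := Real.sqrt_pos.2 hz₀pos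
    have hsqlam : 0 < Real.sqrt lam := Real.sqrt_pos.2 hlam_pos
    have hT0 : 0 < T := by
      rw [hT]
      apply div_pos (by nlinarith) (by rw [Real.sqrt_mul hz₀pos.le]; positivity)
    obtain ⟨δ₁, hδ₁pos, hδ₁top, hδ₁⟩ := gaussian_halfspace_bound hd T
    set δ := P (Z ⁻¹' Set.Icc z₀ z₁) * δ₁ with hδdef
    have hδpos : δ ≠ 0 := mul_ne_zero hk hδ₁pos.ne'
    have hδtop : δ ≠ ⊤ := ENNReal.mul_ne_top (measure_ne_top P _) hδ₁top
    have hLδ : L 0 / δ ≠ ⊤ := (ENNReal.div_lt_top hL0top hδpos).ne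
    set κ := (L 0 / δ).toReal + 1 with hκ
    have hκgt : L 0 / δ < ENNReal.ofReal κ := by
      rw [hκ]
      conv_lhs => rw [← ENNReal.ofReal_toReal hLδ]
      rw [ENNReal.ofReal_lt_ofReal_iff (by positivity)]
      linarith
    obtain ⟨w₀, hw₀⟩ : ∃ w₀ : ℝ, ∀ w ≤ w₀, U w ≤ M - κ := by
      have hev := hUbot.eventually (eventually_le_atBot (M - κ))
      rw [eventually_atBot] at hev
      exact hev
    refine ⟨max 1 ((W0 * (1 + rf) - w₀) / W0), le_max_left _ _, ?_⟩
    intro x hxR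
    have hxn : 0 < ‖x‖ := lt_of_lt_of_le (lt_of_lt_of_le one_pos (le_max_left _ _)) hxR
    have hx0 : x ≠ 0 := fun h => by rw [h] at hxn; simp at hxn
    have hQ2pos : 0 < ∑ j, (∑ i, A i j * x i) ^ 2 :=
      lt_of_lt_of_le (by positivity) (hlam x)
    set e := Real.sqrt (∑ j, (∑ i, A i j * x i) ^ 2) with he
    have hepos : 0 < e := Real.sqrt_pos.2 hQ2pos
    set u : Fin d → ℝ := fun j => e⁻¹ * ∑ i, A i j * x i with hu
    have huunit : ∑ j, u j ^ 2 = 1 := by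
      have hc : ∀ j : Fin d, u j ^ 2 = e⁻¹ ^ 2 * (∑ i, A i j * x i) ^ 2 := fun j => by
        rw [hu]; ring
      rw [Finset.sum_congr rfl fun j _ => hc j, ← Finset.mul_sum, he, inv_pow,
        Real.sq_sqrt hQ2pos.le, inv_mul_cancel₀ hQ2pos.ne']
    set E := (Z ⁻¹' Set.Icc z₀ z₁) ∩ (N ⁻¹' {n | ∑ i, u i * n i < -T}) with hE
    have hEmeas : MeasurableSet E :=
      (hZmeas measurableSet_Icc).inter (hNmeas (measurableSet_halfspace u (-T)))
    have hPE : δ ≤ P E := by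
      rw [hE, hindep.measure_inter_preimage_eq_mul _ _ measurableSet_Icc
        (measurableSet_halfspace u (-T))]
      have hNH : P (N ⁻¹' {n | ∑ i, u i * n i < -T})
          = (Measure.pi fun _ : Fin d => gaussianReal 0 1) {n | ∑ i, u i * n i < -T} := by
        rw [← hNlaw, Measure.map_apply hNmeas (measurableSet_halfspace u (-T))]
      rw [hNH]
      exact mul_le_mul' le_rfl (hδ₁ u huunit)
    have hWbound : ∀ ω ∈ E, U (wealth μ γ A Z N rf W0 x ω)
        ≤ U (W0 * (1 + rf) - W0 * ‖x‖) := by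
      intro ω hω
      obtain ⟨hωZ, hωN⟩ := hω
      simp only [Set.mem_preimage, Set.mem_Icc] at hωZ
      have hNu : ∑ i, u i * N ω i < -T := hωN
      apply hUmono
      rw [wealth_eq]
      have hb1 : ∑ i, x i * (μ i - rf) ≤ ‖x‖ * Cb := by
        calc ∑ i, x i * (μ i - rf) ≤ |∑ i, x i * (μ i - rf)| := le_abs_self _
          _ ≤ ∑ i, |x i * (μ i - rf)| := Finset.abs_sum_le_sum_abs _ _
          _ ≤ ∑ i, ‖x‖ * |μ i - rf| := Finset.sum_le_sum fun i _ => by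
              rw [abs_mul]
              exact mul_le_mul_of_nonneg_right
                (by simpa [Real.norm_eq_abs] using norm_le_pi_norm x i) (abs_nonneg _)
          _ = ‖x‖ * Cb := by rw [hCb, Finset.mul_sum]
      have hb2 : |∑ i, x i * γ i| ≤ ‖x‖ * Cγ := by
        calc |∑ i, x i * γ i| ≤ ∑ i, |x i * γ i| := Finset.abs_sum_le_sum_abs _ _
          _ ≤ ∑ i, ‖x‖ * |γ i| := Finset.sum_le_sum fun i _ => by
              rw [abs_mul]
              exact mul_le_mul_of_nonneg_right
                (by simpa [Real.norm_eq_abs] using norm_le_pi_norm x i) (abs_nonneg _)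
          _ = ‖x‖ * Cγ := by rw [hCγ, Finset.mul_sum]
      have hb2' : (∑ i, x i * γ i) * Z ω ≤ (‖x‖ * Cγ) * z₁ := by
        calc (∑ i, x i * γ i) * Z ω ≤ |∑ i, x i * γ i| * Z ω :=
              mul_le_mul_of_nonneg_right (le_abs_self _) (hZnonneg ω)
          _ ≤ (‖x‖ * Cγ) * Z ω := mul_le_mul_of_nonneg_right hb2 (hZnonneg ω)
          _ ≤ (‖x‖ * Cγ) * z₁ := mul_le_mul_of_nonneg_left hωZ.2 (by positivity)
      have hsum : ∑ j, (∑ i, A i j * x i) * N ω j = e * ∑ j, u j * N ω j := by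
        rw [Finset.mul_sum]
        refine Finset.sum_congr rfl fun j _ => ?_
        rw [hu]
        field_simp
      have hGle : ∑ j, u j * N ω j ≤ -T := hNu.le
      have hGneg : ∑ j, u j * N ω j ≤ 0 := by linarith
      have hse : Real.sqrt z₀ * (Real.sqrt lam * ‖x‖) ≤ Real.sqrt (Z ω) * e := by
        apply mul_le_mul (Real.sqrt_le_sqrt hωZ.1) ?_ (by positivity) (Real.sqrt_nonneg _)
        calc Real.sqrt lam * ‖x‖ = Real.sqrt (lam * ‖x‖ ^ 2) := by
              rw [Real.sqrt_mul hlam_pos.le, Real.sqrt_sq (norm_nonneg _)]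
          _ ≤ e := Real.sqrt_le_sqrt (hlam x)
      have h3 : Real.sqrt (Z ω) * e * (∑ j, u j * N ω j)
          ≤ (Real.sqrt z₀ * (Real.sqrt lam * ‖x‖)) * (∑ j, u j * N ω j) :=
        mul_le_mul_of_nonpos_right hse hGneg
      have h4 : (Real.sqrt z₀ * (Real.sqrt lam * ‖x‖)) * (∑ j, u j * N ω j)
          ≤ (Real.sqrt z₀ * (Real.sqrt lam * ‖x‖)) * (-T) :=
        mul_le_mul_of_nonneg_left hGle (by positivity)
      have h5 : (Real.sqrt z₀ * (Real.sqrt lam * ‖x‖)) * (-T)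
          = -(‖x‖ * (1 + Cb + Cγ * z₁)) := by
        rw [hT, Real.sqrt_mul hz₀pos.le]
        field_simp
      have key : (∑ i, x i * (μ i - rf)) + (∑ i, x i * γ i) * Z ω
          + Real.sqrt (Z ω) * ∑ j, (∑ i, A i j * x i) * N ω j ≤ -‖x‖ := by
        rw [hsum, ← mul_assoc]
        linarith [h3, h4, h5, hb1, hb2']
      have hkey2 := mul_le_mul_of_nonneg_left key hW0.le
      linarith
    have hLlower : ENNReal.ofReal (M - U (W0 * (1 + rf) - W0 * ‖x‖)) * P E ≤ L x := by
      have hptw : ∀ ω, E.indicator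
            (fun _ => ENNReal.ofReal (M - U (W0 * (1 + rf) - W0 * ‖x‖))) ω
          ≤ ENNReal.ofReal (M - U (wealth μ γ A Z N rf W0 x ω)) := by
        intro ω
        by_cases hω : ω ∈ E
        · rw [Set.indicator_of_mem hω]
          exact ENNReal.ofReal_le_ofReal (by linarith [hWbound ω hω])
        · rw [Set.indicator_of_notMem hω]; exact zero_le
      calc ENNReal.ofReal (M - U (W0 * (1 + rf) - W0 * ‖x‖)) * P E
          = ∫⁻ ω, E.indicator
              (fun _ => ENNReal.ofReal (M - U (W0 * (1 + rf) - W0 * ‖x‖))) ω ∂P := by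
            rw [lintegral_indicator hEmeas, setLIntegral_const]
        _ ≤ L x := lintegral_mono hptw
    have hUx : U (W0 * (1 + rf) - W0 * ‖x‖) ≤ M - κ := by
      apply hw₀
      have hxge : (W0 * (1 + rf) - w₀) / W0 ≤ ‖x‖ := le_trans (le_max_right _ _) hxR
      rw [div_le_iff₀ hW0] at hxge
      nlinarith
    calc L 0 = L 0 / δ * δ := (ENNReal.div_mul_cancel hδpos hδtop).symm
      _ < ENNReal.ofReal κ * δ := ENNReal.mul_lt_mul_left hδpos hδtop hκgt
      _ ≤ ENNReal.ofReal (M - U (W0 * (1 + rf) - W0 * ‖x‖)) * P E :=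
          mul_le_mul' (ENNReal.ofReal_le_ofReal (by linarith)) hPE
      _ ≤ L x := hLlower
  obtain ⟨R, hR1, hRbig⟩ := hcoer
  have hball : IsCompact (Metric.closedBall (0 : Fin d → ℝ) R) := isCompact_closedBall _ _
  have h0mem : (0 : Fin d → ℝ) ∈ Metric.closedBall (0 : Fin d → ℝ) R := by
    exact Metric.mem_closedBall_self (by linarith)
  obtain ⟨x₀, hx₀B, hx₀min⟩ := exists_min_ennreal hball ⟨0, h0mem⟩ L
    (fun xs x _ hconv => hLlsc xs x hconv)
  have hglobal : ∀ x : Fin d → ℝ, L x₀ ≤ L x := by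
    intro x
    by_cases hx : x ∈ Metric.closedBall (0 : Fin d → ℝ) R
    · exact hx₀min x hx
    · have hxR : R ≤ ‖x‖ := by
        rw [Metric.mem_closedBall, dist_zero_right, not_le] at hx
        exact hx.le
      exact le_trans (hx₀min 0 h0mem) (hRbig x hxR).le
  have hx₀top : L x₀ ≠ ⊤ := (lt_of_le_of_lt (hx₀min 0 h0mem) hL0top.lt_top).ne
  refine ⟨x₀, ?_, ?_, ?_⟩
  · rw [heexp x₀, enn_coe_ereal ENNReal.ofReal_ne_top, enn_coe_ereal hx₀top, ← EReal.coe_sub]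
    exact EReal.coe_ne_bot _
  · rw [heexp x₀, enn_coe_ereal ENNReal.ofReal_ne_top, enn_coe_ereal hx₀top, ← EReal.coe_sub]
    exact EReal.coe_ne_top _
  · intro x
    rw [heexp x, heexp x₀]
    exact EReal.sub_le_sub le_rfl (EReal.coe_ennreal_le_coe_ennreal_iff.2 (hglobal x))


end
end

section
/- Assume U satisfies Assumption 1 and P(Z > 0) > 0. Let D ⊆ ℝ^d be a closed set containing a point x₁ with E[U(W(x₁))] > −∞. Then the map x ↦ E[U(W(x))] is upper semi-continuous, and the problem max_{x∈D} E[U(W(x))] has a solution: there exists x₀ ∈ D with E[U(W(x₀))] > −∞ and E[U(W(x))] ≤ E[U(W(x₀))] for all x ∈ D. -/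
open MeasureTheory ProbabilityTheory Filter Matrix
open scoped ENNReal NNReal Topology

noncomputable section

-- measurability in ω
lemma meas_aux {Ω : Type*} [MeasurableSpace Ω] {d : ℕ} (μ γ : Fin d → ℝ)
    (A : Matrix (Fin d) (Fin d) ℝ) (Z : Ω → ℝ) (N : Ω → Fin d → ℝ)
    (hZ : Measurable Z) (hN : Measurable N) (rf W0 : ℝ) {U : ℝ → ℝ} (hU : Continuous U)
    (x : Fin d → ℝ) : Measurable fun ω => U (wealth μ γ A Z N rf W0 x ω) := by
  apply hU.measurable.comp
  unfold wealth nmvmX Matrix.mulVec dotProduct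
  have hsq : Measurable fun ω => Real.sqrt (Z ω) := Real.continuous_sqrt.measurable.comp hZ
  have hNj : ∀ j, Measurable fun ω => N ω j := fun j => (measurable_pi_apply j).comp hN
  measurability

-- continuity in x
lemma cont_aux {Ω : Type*} {d : ℕ} (μ γ : Fin d → ℝ)
    (A : Matrix (Fin d) (Fin d) ℝ) (Z : Ω → ℝ) (N : Ω → Fin d → ℝ)
    (rf W0 : ℝ) {U : ℝ → ℝ} (hU : Continuous U)
    (ω : Ω) : Continuous fun x : Fin d → ℝ => U (wealth μ γ A Z N rf W0 x ω) := by
  apply hU.comp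
  unfold wealth
  exact continuous_const.add (continuous_const.mul
    (continuous_finset_sum _ fun i _ => (continuous_apply i).mul continuous_const))

lemma coe_ennreal_eq_coe_toReal {x : ℝ≥0∞} (hx : x ≠ ⊤) :
    (x : EReal) = ((x.toReal : ℝ) : EReal) := by
  conv_lhs => rw [← ENNReal.ofReal_toReal hx]
  rw [EReal.coe_ennreal_ofReal, max_eq_left ENNReal.toReal_nonneg]

lemma eexp_eq {Ω : Type*} [MeasurableSpace Ω] (P : Measure Ω) [IsProbabilityMeasure P]
    {f : Ω → ℝ} (hf : Measurable f) {c : ℝ} (hc : 0 ≤ c) (hfc : ∀ ω, f ω ≤ c) :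
    eexp P f = (c : EReal) - ((∫⁻ ω, ENNReal.ofReal (c - f ω) ∂P : ℝ≥0∞) : EReal) := by
  set a := ∫⁻ ω, ENNReal.ofReal (f ω) ∂P with ha
  set b := ∫⁻ ω, ENNReal.ofReal (-(f ω)) ∂P with hb
  have ha_le : a ≤ ENNReal.ofReal c := by
    calc a ≤ ∫⁻ _, ENNReal.ofReal c ∂P :=
          lintegral_mono fun ω => ENNReal.ofReal_le_ofReal (hfc ω)
      _ = ENNReal.ofReal c := by simp
  have ha_ne : a ≠ ⊤ := (lt_of_le_of_lt ha_le ENNReal.ofReal_lt_top).ne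
  have hpoint : ∀ ω, ENNReal.ofReal (c - f ω)
      = (ENNReal.ofReal c - ENNReal.ofReal (f ω)) + ENNReal.ofReal (-(f ω)) := by
    intro ω
    rcases le_or_gt 0 (f ω) with h | h
    · rw [ENNReal.ofReal_sub _ h, ENNReal.ofReal_of_nonpos (neg_nonpos.mpr h), add_zero]
    · rw [ENNReal.ofReal_of_nonpos h.le, tsub_zero, ← ENNReal.ofReal_add hc (neg_nonneg.mpr h.le)]
      ring_nf
  have hsplit : (∫⁻ ω, ENNReal.ofReal (c - f ω) ∂P) = (ENNReal.ofReal c - a) + b := by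
    simp_rw [hpoint]
    rw [lintegral_add_right (g := fun ω => ENNReal.ofReal (-(f ω))) _ hf.neg.ennreal_ofReal]
    congr 1
    rw [lintegral_sub hf.ennreal_ofReal ha_ne
      (Eventually.of_forall fun ω => ENNReal.ofReal_le_ofReal (hfc ω))]
    simp
    rfl
  rw [hsplit]
  unfold eexp
  rw [← ha, ← hb]
  rcases eq_or_ne b ⊤ with hbtop | hbne
  · rw [hbtop]
    rw [show ENNReal.ofReal c - a + (⊤:ℝ≥0∞) = ⊤ from add_top _, EReal.coe_ennreal_top,
      EReal.sub_top, EReal.sub_top]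
  · have hG_ne : (ENNReal.ofReal c - a) + b ≠ ⊤ := by
      apply ENNReal.add_ne_top.mpr
      exact ⟨(lt_of_le_of_lt (tsub_le_self) ENNReal.ofReal_lt_top).ne, hbne⟩
    rw [coe_ennreal_eq_coe_toReal ha_ne, coe_ennreal_eq_coe_toReal hbne,
      coe_ennreal_eq_coe_toReal hG_ne]
    rw [← EReal.coe_sub, ← EReal.coe_sub]
    norm_cast
    rw [ENNReal.toReal_add (by simpa using (lt_of_le_of_lt (tsub_le_self) ENNReal.ofReal_lt_top).ne) hbne,
      ENNReal.toReal_sub_of_le ha_le (by simp), ENNReal.toReal_ofReal hc]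
    ring
lemma liminf_lem {Ω : Type*} [MeasurableSpace Ω] (P : Measure Ω)
    (g : ℕ → Ω → ℝ≥0∞) (g0 : Ω → ℝ≥0∞)
    (hm : ∀ n, Measurable (g n)) (hpt : ∀ ω, Tendsto (fun n => g n ω) atTop (𝓝 (g0 ω))) :
    ∫⁻ ω, g0 ω ∂P ≤ liminf (fun n => ∫⁻ ω, g n ω ∂P) atTop := by
  have h : ∫⁻ ω, g0 ω ∂P = ∫⁻ ω, liminf (fun n => g n ω) atTop ∂P :=
    lintegral_congr fun ω => ((hpt ω).liminf_eq).symm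
  rw [h]
  exact lintegral_liminf_le hm

lemma ev_lem {α : Type*} [TopologicalSpace α] [FirstCountableTopology α]
    {Ω : Type*} [MeasurableSpace Ω] (P : Measure Ω)
    {g : α → Ω → ℝ≥0∞} (hm : ∀ x, Measurable (g x)) (hcont : ∀ ω, Continuous fun x => g x ω)
    (x₀ : α) {z : ℝ≥0∞} (hz : z < ∫⁻ ω, g x₀ ω ∂P) :
    ∀ᶠ x in 𝓝 x₀, z < ∫⁻ ω, g x ω ∂P := by
  by_contra h
  rw [Filter.not_eventually] at h
  obtain ⟨u, hu, hub⟩ := Filter.exists_seq_forall_of_frequently h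
  have hle : ∫⁻ ω, g x₀ ω ∂P ≤ z := by
    refine le_trans (liminf_lem P (fun n => g (u n)) _ (fun n => hm _)
      (fun ω => (((hcont ω).tendsto x₀).comp hu))) ?_
    calc liminf (fun n => ∫⁻ ω, g (u n) ω ∂P) atTop
        ≤ liminf (fun _ => z) atTop :=
          liminf_le_liminf (Eventually.of_forall fun n => not_lt.1 (hub n))
      _ = z := liminf_const z
  exact absurd hle (not_le.mpr hz)

lemma helper1 {c yr : ℝ} {b : ℝ≥0∞} (hb : 0 < b) (h : ENNReal.ofReal (c - yr) < b) :
    (c : EReal) - (b : EReal) < (yr : EReal) := by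
  rcases eq_or_ne b ⊤ with rfl | hbt
  · rw [EReal.coe_ennreal_top, EReal.sub_top]; exact EReal.bot_lt_coe yr
  · rw [coe_ennreal_eq_coe_toReal hbt, ← EReal.coe_sub, EReal.coe_lt_coe_iff]
    rcases le_or_gt (c - yr) 0 with h0 | h0
    · have : 0 < b.toReal := ENNReal.toReal_pos hb.ne' hbt
      linarith
    · have := (ENNReal.ofReal_lt_iff_lt_toReal h0.le hbt).mp h
      linarith

lemma helper2 {c yr : ℝ} {b : ℝ≥0∞} (hb : 0 < b) (h : (c : EReal) - (b : EReal) < (yr : EReal)) :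
    ENNReal.ofReal (c - yr) < b := by
  rcases eq_or_ne b ⊤ with rfl | hbt
  · exact ENNReal.ofReal_lt_top
  · rw [coe_ennreal_eq_coe_toReal hbt, ← EReal.coe_sub, EReal.coe_lt_coe_iff] at h
    rcases le_or_gt (c - yr) 0 with h0 | h0
    · exact lt_of_le_of_lt (by simp [ENNReal.ofReal_of_nonpos h0]) hb
    · have hbr : c - yr < b.toReal := by linarith
      calc ENNReal.ofReal (c - yr) < ENNReal.ofReal b.toReal :=
            (ENNReal.ofReal_lt_ofReal_iff (by linarith)).mpr hbr
        _ = b := ENNReal.ofReal_toReal hbt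
lemma event_lem {Ω : Type*} [MeasurableSpace Ω] (P : Measure Ω) [IsProbabilityMeasure P]
    {d : ℕ} (hd : 0 < d) (μ γ : Fin d → ℝ) (A : Matrix (Fin d) (Fin d) ℝ)
    (Z : Ω → ℝ) (N : Ω → Fin d → ℝ)
    (hZmeas : Measurable Z) (hNmeas : Measurable N)
    (hZnonneg : ∀ ω, 0 ≤ Z ω)
    (hZposprob : 0 < P {ω | 0 < Z ω})
    (hNlaw : Measure.map N P = Measure.pi fun _ : Fin d => gaussianReal 0 1)
    (hindep : IndepFun Z N P)
    (hPD : (A * Aᵀ).PosDef)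
    (rf W0 : ℝ) (hW0 : 0 < W0) :
    ∃ δ : ℝ≥0∞, 0 < δ ∧
      ∀ x : Fin d → ℝ,
        δ ≤ P {ω | wealth μ γ A Z N rf W0 x ω ≤ W0 * (1 + rf) - W0 * ‖x‖} := by
  classical
  haveI : Nonempty (Fin d) := ⟨⟨0, hd⟩⟩
  -- the quadratic form
  set q : (Fin d → ℝ) → ℝ := fun u => (u ᵥ* A) ⬝ᵥ (u ᵥ* A) with hqdef
  have hqpos : ∀ u : Fin d → ℝ, u ≠ 0 → 0 < q u := by
    intro u hu
    have h := hPD.dotProduct_mulVec_pos hu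
    have hstar : star u = u := by funext i; exact star_trivial _
    rw [hstar, ← Matrix.mulVec_mulVec, Matrix.dotProduct_mulVec, Matrix.mulVec_transpose] at h
    exact h
  have hqcont : Continuous q := by
    simp only [hqdef, Matrix.vecMul, dotProduct]
    exact continuous_finset_sum _ fun j _ =>
      ((continuous_finset_sum _ fun i _ => (continuous_apply i).mul continuous_const).mul
        (continuous_finset_sum _ fun i _ => (continuous_apply i).mul continuous_const))
  obtain ⟨u₀, hu₀mem, hu₀min⟩ := (isCompact_sphere (0 : Fin d → ℝ) 1).exists_isMinOn
    (NormedSpace.sphere_nonempty.mpr zero_le_one) hqcont.continuousOn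
  have hu₀norm : ‖u₀‖ = 1 := by simpa [mem_sphere_zero_iff_norm] using hu₀mem
  set lam : ℝ := q u₀ with hlamdef
  have hlam : 0 < lam := hqpos u₀ (by intro h; rw [h] at hu₀norm; simp at hu₀norm)
  have hq_lb : ∀ x : Fin d → ℝ, lam * ‖x‖ ^ 2 ≤ q x := by
    intro x
    rcases eq_or_ne x 0 with rfl | hx
    · simp [hqdef]
    · have hxn : (0:ℝ) < ‖x‖ := norm_pos_iff.mpr hx
      set u : Fin d → ℝ := ‖x‖⁻¹ • x with hudef
      have hu : ‖u‖ = 1 := by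
        rw [hudef, norm_smul, norm_inv, norm_norm]
        field_simp
      have h1 : lam ≤ q u := hu₀min (by simpa [mem_sphere_zero_iff_norm] using hu)
      have hscale : q u = ‖x‖⁻¹ * (‖x‖⁻¹ * q x) := by
        simp only [hqdef, hudef, Matrix.smul_vecMul, smul_dotProduct,
          dotProduct_smul, smul_eq_mul]
      rw [hscale] at h1
      have h2 := mul_le_mul_of_nonneg_left h1 (le_of_lt (mul_pos hxn hxn))
      calc lam * ‖x‖ ^ 2 = ‖x‖ * ‖x‖ * lam := by ring
        _ ≤ ‖x‖ * ‖x‖ * (‖x‖⁻¹ * (‖x‖⁻¹ * q x)) := h2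
        _ = q x := by field_simp
  -- choice of η, K
  have hsub : {ω | 0 < Z ω} ⊆ ⋃ n : ℕ, Z ⁻¹' (Set.Icc ((n : ℝ) + 1)⁻¹ ((n : ℝ) + 1)) := by
    intro ω hω
    have hω : 0 < Z ω := hω
    obtain ⟨n, hn⟩ := exists_nat_gt (max (Z ω) (Z ω)⁻¹)
    refine Set.mem_iUnion.mpr ⟨n, ?_, ?_⟩
    · have h1 : (Z ω)⁻¹ < (n : ℝ) + 1 :=
        lt_trans (lt_of_le_of_lt (le_max_right _ _) hn) (by linarith)
      exact (inv_lt_of_inv_lt₀ hω h1).le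
    · have h2 : Z ω < (n : ℝ) + 1 :=
        lt_trans (lt_of_le_of_lt (le_max_left _ _) hn) (by linarith)
      exact h2.le
  have hex : ∃ n : ℕ, P (Z ⁻¹' Set.Icc ((n : ℝ) + 1)⁻¹ ((n : ℝ) + 1)) ≠ 0 := by
    by_contra h
    push_neg at h
    exact absurd (measure_mono_null hsub (measure_iUnion_null h)) hZposprob.ne'
  obtain ⟨n, hn⟩ := hex
  set η : ℝ := ((n : ℝ) + 1)⁻¹ with hηdef
  set Kc : ℝ := (n : ℝ) + 1 with hKcdef
  have hη : 0 < η := by positivity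
  have hKc : 0 < Kc := by positivity
  set p₀ := P (Z ⁻¹' Set.Icc η Kc) with hp₀def
  have hp₀ : 0 < p₀ := pos_iff_ne_zero.mpr hn
  -- constants
  set C : ℝ := (∑ i, |μ i - rf|) + Kc * ∑ i, |γ i| with hCdef
  have hC : 0 ≤ C := by positivity
  have hdR : (0:ℝ) < d := Nat.cast_pos.mpr hd
  set κ : ℝ := Real.sqrt (lam / d) with hκdef
  have hκ : 0 < κ := Real.sqrt_pos.mpr (by positivity)
  have hκ2 : κ ^ 2 * d = lam := by
    rw [hκdef, Real.sq_sqrt (by positivity)]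
    field_simp
  have hsqη : 0 < Real.sqrt η := Real.sqrt_pos.mpr hη
  set T : ℝ := (d : ℝ) + (C + 1) / (Real.sqrt η * κ) with hTdef
  have hTd : Real.sqrt η * κ * (T - d) = C + 1 := by
    rw [hTdef]
    field_simp
    ring
  have hTd0 : 0 ≤ T - (d : ℝ) := by
    rw [hTdef]
    have : 0 ≤ (C + 1) / (Real.sqrt η * κ) := by positivity
    linarith
  -- gaussian positivity
  set ν : Measure ℝ := gaussianReal 0 1 with hνdef
  have hν : ∀ s : Set ℝ, volume s ≠ 0 → 0 < ν s := by
    intro s hs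
    rw [pos_iff_ne_zero]
    intro h0
    exact hs ((gaussianReal_absolutelyContinuous' 0 one_ne_zero) h0)
  have hρ1 : 0 < ν (Set.Iic (-T)) := hν _ (by rw [Real.volume_Iic]; simp)
  have hρ2 : 0 < ν (Set.Ici T) := hν _ (by rw [Real.volume_Ici]; simp)
  have hρ3 : 0 < ν (Set.Icc (-1 : ℝ) 1) := hν _ (by rw [Real.volume_Icc]; norm_num)
  set ρ : ℝ≥0∞ := min (ν (Set.Iic (-T))) (min (ν (Set.Ici T)) (ν (Set.Icc (-1 : ℝ) 1))) with hρdef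
  have hρ : 0 < ρ := lt_min hρ1 (lt_min hρ2 hρ3)
  have hρ1' : ρ ≤ 1 := le_trans (min_le_left _ _) prob_le_one
  refine ⟨p₀ * ρ ^ d, ENNReal.mul_pos hp₀.ne' (ENNReal.pow_pos hρ d).ne', ?_⟩
  intro x
  rcases eq_or_ne x 0 with rfl | hx
  · have huniv : {ω | wealth μ γ A Z N rf W0 (0 : Fin d → ℝ) ω
        ≤ W0 * (1 + rf) - W0 * ‖(0 : Fin d → ℝ)‖} = Set.univ := by
      ext ω
      simp [wealth]
    rw [huniv, measure_univ]
    exact mul_le_one' prob_le_one (pow_le_one' hρ1' d)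
  -- main case
  set w : Fin d → ℝ := x ᵥ* A with hwdef
  obtain ⟨j₀, -, hj₀⟩ := Finset.exists_max_image Finset.univ (fun j => |w j|) ⟨⟨0, hd⟩, Finset.mem_univ _⟩
  have hwj₀ : κ * ‖x‖ ≤ |w j₀| := by
    have h1 : lam * ‖x‖ ^ 2 ≤ q x := hq_lb x
    have hqx : q x = ∑ j, w j * w j := rfl
    have hsum_le : q x ≤ (d : ℝ) * (w j₀ * w j₀) := by
      rw [hqx]
      calc ∑ j, w j * w j ≤ ∑ _j : Fin d, |w j₀| * |w j₀| := by
            refine Finset.sum_le_sum fun j _ => ?_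
            rw [← abs_mul_abs_self (w j)]
            exact mul_le_mul (hj₀ j (Finset.mem_univ _)) (hj₀ j (Finset.mem_univ _))
              (abs_nonneg _) (abs_nonneg _)
        _ = (d : ℝ) * (|w j₀| * |w j₀|) := by
            rw [Finset.sum_const, Finset.card_univ, Fintype.card_fin, nsmul_eq_mul]
        _ = (d : ℝ) * (w j₀ * w j₀) := by rw [abs_mul_abs_self]
    have h2 : (κ * ‖x‖) ^ 2 ≤ |w j₀| ^ 2 := by
      have h3 : (d : ℝ) * ((κ * ‖x‖) ^ 2) ≤ (d : ℝ) * (|w j₀| ^ 2) := by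
        have e1 : (d : ℝ) * ((κ * ‖x‖) ^ 2) = (κ ^ 2 * d) * ‖x‖ ^ 2 := by ring
        have e2 : (d : ℝ) * (|w j₀| ^ 2) = (d : ℝ) * (w j₀ * w j₀) := by
          rw [sq_abs]; ring
        rw [e1, e2, hκ2]
        exact le_trans h1 hsum_le
      exact le_of_mul_le_mul_left h3 hdR
    exact (pow_le_pow_iff_left₀ (by positivity) (abs_nonneg _) two_ne_zero).mp h2
  set Ii : Fin d → Set ℝ := fun j =>
    if j = j₀ then (if 0 ≤ w j₀ then Set.Iic (-T) else Set.Ici T) else Set.Icc (-1) 1 with hIidef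
  have hImeas : ∀ j, MeasurableSet (Ii j) := by
    intro j
    rw [hIidef]
    dsimp only
    split_ifs
    · exact measurableSet_Iic
    · exact measurableSet_Ici
    · exact measurableSet_Icc
  have hIρ : ∀ j, ρ ≤ ν (Ii j) := by
    intro j
    rw [hIidef]
    dsimp only
    split_ifs
    · exact min_le_left _ _
    · exact le_trans (min_le_right _ _) (min_le_left _ _)
    · exact le_trans (min_le_right _ _) (min_le_right _ _)
  set S : Set (Fin d → ℝ) := Set.univ.pi Ii with hSdef
  have hSmeas : MeasurableSet S := MeasurableSet.univ_pi hImeas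
  have hNS : P (N ⁻¹' S) = ∏ j, ν (Ii j) := by
    rw [← Measure.map_apply hNmeas hSmeas, hNlaw, hSdef, Measure.pi_pi]
  have hρd : ρ ^ d ≤ P (N ⁻¹' S) := by
    rw [hNS]
    calc ρ ^ d = ∏ _j : Fin d, ρ := by
          rw [Finset.prod_const, Finset.card_univ, Fintype.card_fin]
      _ ≤ ∏ j, ν (Ii j) := Finset.prod_le_prod' fun j _ => hIρ j
  have hPE : p₀ * ρ ^ d ≤ P (Z ⁻¹' Set.Icc η Kc ∩ N ⁻¹' S) := by
    rw [hindep.measure_inter_preimage_eq_mul _ _ measurableSet_Icc hSmeas]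
    exact mul_le_mul' le_rfl hρd
  refine le_trans hPE (measure_mono ?_)
  rintro ω ⟨hZω, hNω⟩
  have hZ1 : η ≤ Z ω := hZω.1
  have hZ2 : Z ω ≤ Kc := hZω.2
  have hNj : ∀ j, N ω j ∈ Ii j := fun j => hNω j (Set.mem_univ j)
  have hxi : ∀ i, |x i| ≤ ‖x‖ := fun i => by
    simpa [Real.norm_eq_abs] using norm_le_pi_norm x i
  -- expansion of the sum
  have hsum : ∑ i, x i * (nmvmX μ γ A Z N ω i - rf)
      = (∑ i, x i * (μ i - rf)) + (∑ i, x i * γ i) * Z ω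
        + Real.sqrt (Z ω) * ∑ j, w j * N ω j := by
    have hxAN : ∑ i, x i * (A *ᵥ N ω) i = ∑ j, w j * N ω j := by
      have := Matrix.dotProduct_mulVec x A (N ω)
      simpa [dotProduct, hwdef] using this
    rw [← hxAN, Finset.sum_mul, Finset.mul_sum, ← Finset.sum_add_distrib,
      ← Finset.sum_add_distrib]
    refine Finset.sum_congr rfl fun i _ => ?_
    simp only [nmvmX]
    ring
  -- bounds
  have hT1 : ∑ i, x i * (μ i - rf) ≤ ‖x‖ * ∑ i, |μ i - rf| := by
    rw [Finset.mul_sum]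
    refine Finset.sum_le_sum fun i _ => ?_
    calc x i * (μ i - rf) ≤ |x i * (μ i - rf)| := le_abs_self _
      _ = |x i| * |μ i - rf| := abs_mul _ _
      _ ≤ ‖x‖ * |μ i - rf| := mul_le_mul_of_nonneg_right (hxi i) (abs_nonneg _)
  have hT2 : (∑ i, x i * γ i) * Z ω ≤ ‖x‖ * (∑ i, |γ i|) * Kc := by
    have habs : |∑ i, x i * γ i| ≤ ‖x‖ * ∑ i, |γ i| := by
      calc |∑ i, x i * γ i| ≤ ∑ i, |x i * γ i| := Finset.abs_sum_le_sum_abs _ _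
        _ ≤ ∑ i, ‖x‖ * |γ i| := by
            refine Finset.sum_le_sum fun i _ => ?_
            rw [abs_mul]
            exact mul_le_mul_of_nonneg_right (hxi i) (abs_nonneg _)
        _ = ‖x‖ * ∑ i, |γ i| := by rw [Finset.mul_sum]
    have h1 : (∑ i, x i * γ i) * Z ω ≤ |∑ i, x i * γ i| * Z ω :=
      mul_le_mul_of_nonneg_right (le_abs_self _) (hZnonneg ω)
    have h2 : |∑ i, x i * γ i| * Z ω ≤ |∑ i, x i * γ i| * Kc :=
      mul_le_mul_of_nonneg_left hZ2 (abs_nonneg _)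
    have h3 : |∑ i, x i * γ i| * Kc ≤ (‖x‖ * ∑ i, |γ i|) * Kc :=
      mul_le_mul_of_nonneg_right habs hKc.le
    linarith
  have hmain : ∑ j, w j * N ω j ≤ -(|w j₀| * (T - d)) := by
    have hsplit : ∑ j, w j * N ω j
        = w j₀ * N ω j₀ + ∑ j ∈ Finset.univ.erase j₀, w j * N ω j :=
      (Finset.add_sum_erase _ _ (Finset.mem_univ j₀)).symm
    have h1 : w j₀ * N ω j₀ ≤ -(|w j₀| * T) := by
      have hmem : N ω j₀ ∈ (if 0 ≤ w j₀ then Set.Iic (-T) else Set.Ici T) := by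
        have h := hNj j₀
        rw [hIidef] at h
        simpa using h
      by_cases hsign : 0 ≤ w j₀
      · rw [if_pos hsign] at hmem
        have hle : N ω j₀ ≤ -T := hmem
        have h5 := mul_le_mul_of_nonneg_left hle hsign
        rw [abs_of_nonneg hsign]
        exact le_trans h5 (le_of_eq (by ring))
      · rw [if_neg hsign] at hmem
        have hneg : w j₀ < 0 := lt_of_not_ge hsign
        have hle : T ≤ N ω j₀ := hmem
        have h5 := mul_le_mul_of_nonpos_left hle hneg.le
        rw [abs_of_neg hneg]
        exact le_trans h5 (le_of_eq (by ring))
    have h2 : ∑ j ∈ Finset.univ.erase j₀, w j * N ω j ≤ (d : ℝ) * |w j₀| := by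
      have hcard : ((Finset.univ.erase j₀).card : ℝ) ≤ (d : ℝ) := by
        have := Finset.card_erase_le (s := (Finset.univ : Finset (Fin d))) (a := j₀)
        calc ((Finset.univ.erase j₀).card : ℝ) ≤ (Finset.univ.card : ℝ) := by exact_mod_cast this
          _ = (d : ℝ) := by rw [Finset.card_univ, Fintype.card_fin]
      calc ∑ j ∈ Finset.univ.erase j₀, w j * N ω j
          ≤ ∑ _j ∈ Finset.univ.erase j₀, |w j₀| := by
            refine Finset.sum_le_sum fun j hj => ?_
            have hmem : N ω j ∈ Set.Icc (-1 : ℝ) 1 := by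
              have h := hNj j
              rw [hIidef] at h
              simpa [Finset.ne_of_mem_erase hj] using h
            obtain ⟨hl, hr⟩ := hmem
            calc w j * N ω j ≤ |w j * N ω j| := le_abs_self _
              _ = |w j| * |N ω j| := abs_mul _ _
              _ ≤ |w j₀| * 1 := mul_le_mul (hj₀ j (Finset.mem_univ _))
                  (abs_le.mpr ⟨hl, hr⟩) (abs_nonneg _) (abs_nonneg _)
              _ = |w j₀| := mul_one _
        _ = ((Finset.univ.erase j₀).card : ℝ) * |w j₀| := by
            rw [Finset.sum_const, nsmul_eq_mul]
        _ ≤ (d : ℝ) * |w j₀| := mul_le_mul_of_nonneg_right hcard (abs_nonneg _)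
    rw [hsplit]
    linarith only [h1, h2]
  have hB : 0 ≤ |w j₀| * (T - d) := mul_nonneg (abs_nonneg _) hTd0
  have hsqZ : Real.sqrt η ≤ Real.sqrt (Z ω) := Real.sqrt_le_sqrt hZ1
  have hT3 : Real.sqrt (Z ω) * ∑ j, w j * N ω j ≤ -(C + 1) * ‖x‖ := by
    calc Real.sqrt (Z ω) * ∑ j, w j * N ω j
        ≤ Real.sqrt (Z ω) * (-(|w j₀| * (T - d))) :=
          mul_le_mul_of_nonneg_left hmain (Real.sqrt_nonneg _)
      _ ≤ Real.sqrt η * (-(|w j₀| * (T - d))) :=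
          mul_le_mul_of_nonpos_right hsqZ (neg_nonpos.mpr hB)
      _ ≤ Real.sqrt η * (-(κ * ‖x‖ * (T - d))) :=
          mul_le_mul_of_nonneg_left
            (neg_le_neg (mul_le_mul_of_nonneg_right hwj₀ hTd0)) (Real.sqrt_nonneg _)
      _ = -(Real.sqrt η * κ * (T - d)) * ‖x‖ := by ring
      _ = -(C + 1) * ‖x‖ := by rw [hTd]
  have hCx : C * ‖x‖ = ‖x‖ * (∑ i, |μ i - rf|) + (‖x‖ * ∑ i, |γ i|) * Kc := by
    rw [hCdef]; ring
  have hkey : ∑ i, x i * (nmvmX μ γ A Z N ω i - rf) ≤ -‖x‖ := by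
    rw [hsum]
    linarith only [hT1, hT2, hT3, hCx]
  show wealth μ γ A Z N rf W0 x ω ≤ W0 * (1 + rf) - W0 * ‖x‖
  have hh := mul_le_mul_of_nonneg_left hkey hW0.le
  unfold wealth
  linarith only [hh]

/-- under Assumption 1 and `P(Z > 0) > 0`, the map `x ↦ E[U(W(x))]` is
upper semi-continuous, and on any closed set `D` containing a portfolio of finite expected
utility the maximization problem has a solution. -/
theorem stmt18 {Ω : Type*} [MeasurableSpace Ω] (P : Measure Ω) [IsProbabilityMeasure P]
    {d : ℕ} (μ γ : Fin d → ℝ) (A : Matrix (Fin d) (Fin d) ℝ)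
    (Z : Ω → ℝ) (N : Ω → Fin d → ℝ)
    (hZmeas : Measurable Z) (hNmeas : Measurable N)
    (hZnonneg : ∀ ω, 0 ≤ Z ω)
    (hZposprob : 0 < P {ω | 0 < Z ω})
    (hNlaw : Measure.map N P = Measure.pi fun _ : Fin d => gaussianReal 0 1)
    (hindep : IndepFun Z N P)
    (hPD : (A * Aᵀ).PosDef)
    (rf W0 : ℝ) (hW0 : 0 < W0)
    (hμrf : (fun i => μ i - rf) ≠ 0)
    -- Assumption 1
    (U : ℝ → ℝ) (hUcont : Continuous U) (hUmono : Monotone U)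
    (hUnonconst : ∃ w w' : ℝ, U w ≠ U w') (hUbdd : BddAbove (Set.range U))
    (hUbot : Tendsto U atBot atBot)
    (D : Set (Fin d → ℝ)) (hDclosed : IsClosed D)
    (x₁ : Fin d → ℝ) (hx₁D : x₁ ∈ D)
    (hx₁fin : ⊥ < eexp P fun ω => U (wealth μ γ A Z N rf W0 x₁ ω)) :
    UpperSemicontinuous
      (fun x : Fin d → ℝ => eexp P fun ω => U (wealth μ γ A Z N rf W0 x ω)) ∧
    ∃ x₀ ∈ D,
      (⊥ < eexp P fun ω => U (wealth μ γ A Z N rf W0 x₀ ω)) ∧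
      ∀ x ∈ D,
        (eexp P fun ω => U (wealth μ γ A Z N rf W0 x ω)) ≤
          eexp P fun ω => U (wealth μ γ A Z N rf W0 x₀ ω) := by
  classical
  have hd : 0 < d := by
    rcases Nat.eq_zero_or_pos d with h0 | h
    · exfalso
      apply hμrf
      funext i
      exact absurd i.2 (by omega)
    · exact h
  obtain ⟨M₀, hM₀⟩ := hUbdd
  have hM₀' : ∀ wr : ℝ, U wr ≤ M₀ := fun wr => hM₀ ⟨wr, rfl⟩
  set c : ℝ := max M₀ 0 + 1 with hcdef
  have hmax0 : (0:ℝ) ≤ max M₀ 0 := le_max_right _ _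
  have hmaxM : M₀ ≤ max M₀ 0 := le_max_left _ _
  have hc0 : (0:ℝ) ≤ c := by rw [hcdef]; linarith
  have hfc : ∀ x ω, U (wealth μ γ A Z N rf W0 x ω) ≤ c := fun x ω => by
    have := hM₀' (wealth μ γ A Z N rf W0 x ω); rw [hcdef]; linarith
  set F : (Fin d → ℝ) → EReal :=
    fun x => eexp P fun ω => U (wealth μ γ A Z N rf W0 x ω) with hFdef
  set G : (Fin d → ℝ) → ℝ≥0∞ :=
    fun x => ∫⁻ ω, ENNReal.ofReal (c - U (wealth μ γ A Z N rf W0 x ω)) ∂P with hGdef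
  have hfmeas : ∀ x, Measurable fun ω => U (wealth μ γ A Z N rf W0 x ω) :=
    meas_aux μ γ A Z N hZmeas hNmeas rf W0 hUcont
  have hFeq : ∀ x, F x = (c : EReal) - (G x : EReal) := fun x =>
    eexp_eq P (hfmeas x) hc0 (hfc x)
  have hgmeas : ∀ x, Measurable fun ω =>
      ENNReal.ofReal (c - U (wealth μ γ A Z N rf W0 x ω)) :=
    fun x => (measurable_const.sub (hfmeas x)).ennreal_ofReal
  have hgcont : ∀ ω, Continuous fun x : Fin d → ℝ =>
      ENNReal.ofReal (c - U (wealth μ γ A Z N rf W0 x ω)) :=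
    fun ω => ENNReal.continuous_ofReal.comp
      (continuous_const.sub (cont_aux μ γ A Z N rf W0 hUcont ω))
  have hG1 : ∀ x, 1 ≤ G x := by
    intro x
    calc (1 : ℝ≥0∞) = ∫⁻ _, 1 ∂P := by simp
      _ ≤ G x := by
          refine lintegral_mono fun ω => ?_
          rw [show (1:ℝ≥0∞) = ENNReal.ofReal 1 by simp]
          refine ENNReal.ofReal_le_ofReal ?_
          have h1 := hM₀' (wealth μ γ A Z N rf W0 x ω)
          rw [hcdef]
          linarith
  have hGpos : ∀ x, 0 < G x := fun x => lt_of_lt_of_le zero_lt_one (hG1 x)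
  -- upper semicontinuity
  have husc : UpperSemicontinuous F := by
    intro x₀ y hy
    rw [hFeq] at hy
    rcases eq_or_ne y ⊤ with rfl | hytop
    · filter_upwards with x
      rw [hFeq]
      refine lt_of_le_of_lt (le_trans
        (EReal.sub_le_sub le_rfl (EReal.coe_ennreal_nonneg (G x))) ?_) (EReal.coe_lt_top c)
      rw [sub_zero]
    · have hybot : y ≠ ⊥ := (lt_of_le_of_lt bot_le hy).ne'
      have hyy : ((y.toReal : ℝ) : EReal) = y := EReal.coe_toReal hytop hybot
      rw [← hyy] at hy
      have hz := helper2 (hGpos x₀) hy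
      filter_upwards [ev_lem P hgmeas hgcont x₀ hz] with x hx
      rw [hFeq, ← hyy]
      exact helper1 (hGpos x) hx
  refine ⟨husc, ?_⟩
  -- coercivity
  obtain ⟨δ, hδ, hδev⟩ := event_lem P hd μ γ A Z N hZmeas hNmeas hZnonneg hZposprob
    hNlaw hindep hPD rf W0 hW0
  have hδ1 : δ ≤ 1 := le_trans (hδev 0) prob_le_one
  have hδtop : δ ≠ ⊤ := (lt_of_le_of_lt hδ1 ENNReal.one_lt_top).ne
  have hδr : 0 < δ.toReal := ENNReal.toReal_pos hδ.ne' hδtop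
  have hwmeas : ∀ x, Measurable fun ω => wealth μ γ A Z N rf W0 x ω := fun x =>
    meas_aux μ γ A Z N hZmeas hNmeas rf W0 continuous_id x
  have hGlb : ∀ x : Fin d → ℝ,
      ENNReal.ofReal (c - U (W0 * (1 + rf) - W0 * ‖x‖)) * δ ≤ G x := by
    intro x
    set E := {ω | wealth μ γ A Z N rf W0 x ω ≤ W0 * (1 + rf) - W0 * ‖x‖} with hEdef
    have hEmeas : MeasurableSet E := measurableSet_le (hwmeas x) measurable_const
    calc ENNReal.ofReal (c - U (W0 * (1 + rf) - W0 * ‖x‖)) * δ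
        ≤ ENNReal.ofReal (c - U (W0 * (1 + rf) - W0 * ‖x‖)) * P E :=
          mul_le_mul' le_rfl (hδev x)
      _ = ∫⁻ _ω in E, ENNReal.ofReal (c - U (W0 * (1 + rf) - W0 * ‖x‖)) ∂P :=
          (setLIntegral_const _ _).symm
      _ ≤ ∫⁻ ω in E, ENNReal.ofReal (c - U (wealth μ γ A Z N rf W0 x ω)) ∂P := by
          refine setLIntegral_mono (hgmeas x) fun ω hω => ?_
          have h1 : wealth μ γ A Z N rf W0 x ω ≤ W0 * (1 + rf) - W0 * ‖x‖ := hω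
          have h2 := hUmono h1
          exact ENNReal.ofReal_le_ofReal (by linarith)
      _ ≤ G x := setLIntegral_le_lintegral _ _
  -- finiteness at x₁
  have hGx₁ : G x₁ ≠ ⊤ := by
    intro h
    have h2 := hFeq x₁
    rw [h, EReal.coe_ennreal_top, EReal.sub_top] at h2
    have hx₁fin' : ⊥ < F x₁ := hx₁fin
    rw [h2] at hx₁fin'
    exact lt_irrefl _ hx₁fin'
  set r₁ : ℝ := (G x₁).toReal with hr₁def
  have hr₁ : ((G x₁ : ℝ≥0∞) : EReal) = ((r₁ : ℝ) : EReal) := coe_ennreal_eq_coe_toReal hGx₁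
  have hr₁0 : 0 ≤ r₁ := ENNReal.toReal_nonneg
  -- tendsto of the wealth lower bound
  have htend : Tendsto (fun t : ℝ => U (W0 * (1 + rf) - W0 * t)) atTop atBot := by
    apply hUbot.comp
    have h0 : Tendsto (fun t : ℝ => W0 * t) atTop atTop :=
      Tendsto.const_mul_atTop hW0 tendsto_id
    have h1 : Tendsto (fun t : ℝ => -(W0 * t)) atTop atBot := tendsto_neg_atTop_atBot.comp h0
    exact (tendsto_atBot_add_const_left atTop (W0 * (1 + rf)) h1).congr fun t => by ring
  obtain ⟨t₀, ht₀⟩ := eventually_atTop.mp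
    (htend.eventually (eventually_le_atBot (c - (r₁ + 1) / δ.toReal)))
  have hcoer : ∀ x : Fin d → ℝ, t₀ ≤ ‖x‖ → G x₁ < G x := by
    intro x hx
    have h1 : U (W0 * (1 + rf) - W0 * ‖x‖) ≤ c - (r₁ + 1) / δ.toReal := ht₀ ‖x‖ hx
    have h2 : ENNReal.ofReal ((r₁ + 1) / δ.toReal) * δ ≤ G x :=
      le_trans (mul_le_mul' (ENNReal.ofReal_le_ofReal (by linarith)) le_rfl) (hGlb x)
    have h3 : ENNReal.ofReal ((r₁ + 1) / δ.toReal) * δ = ENNReal.ofReal (r₁ + 1) := by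
      conv_lhs => rw [← ENNReal.ofReal_toReal hδtop]
      rw [← ENNReal.ofReal_mul (by positivity)]
      congr 1
      field_simp
      rw [ENNReal.toReal_ofReal ENNReal.toReal_nonneg, div_self hδr.ne']
    calc G x₁ < ENNReal.ofReal (r₁ + 1) := by
          conv_lhs => rw [← ENNReal.ofReal_toReal hGx₁]
          exact (ENNReal.ofReal_lt_ofReal_iff (by linarith)).mpr (by rw [← hr₁def]; linarith)
      _ = ENNReal.ofReal ((r₁ + 1) / δ.toReal) * δ := h3.symm
      _ ≤ G x := h2
  -- compact sublevel region
  set R : ℝ := max t₀ (‖x₁‖ + 1) with hRdef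
  set KK : Set (Fin d → ℝ) := D ∩ Metric.closedBall 0 R with hKKdef
  have hx₁K : x₁ ∈ KK := by
    refine ⟨hx₁D, ?_⟩
    rw [Metric.mem_closedBall, dist_zero_right]
    exact le_trans (by linarith) (le_max_right _ _)
  have hKcomp : IsCompact KK := (isCompact_closedBall (0 : Fin d → ℝ) R).inter_left hDclosed
  set I : ℝ≥0∞ := sInf (G '' KK) with hIdef
  have hIle : I ≤ G x₁ := sInf_le ⟨x₁, hx₁K, rfl⟩
  have hIne : I ≠ ⊤ := (lt_of_le_of_lt hIle (lt_top_iff_ne_top.mpr hGx₁)).ne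
  have hseq : ∀ n : ℕ, ∃ x ∈ KK, G x < I + ((n : ℝ≥0∞) + 1)⁻¹ := by
    intro n
    have hlt : I < I + ((n : ℝ≥0∞) + 1)⁻¹ :=
      ENNReal.lt_add_right hIne (by simp)
    obtain ⟨gv, ⟨x, hxK, rfl⟩, hgv⟩ := sInf_lt_iff.mp hlt
    exact ⟨x, hxK, hgv⟩
  choose xs hxsK hxslt using hseq
  obtain ⟨x₀, hx₀K, φ, hφmono, hφtend⟩ := hKcomp.tendsto_subseq hxsK
  have hGx₀ : G x₀ ≤ I := by
    have hlim : G x₀ ≤ liminf (fun n => G (xs (φ n))) atTop :=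
      liminf_lem P _ _ (fun n => hgmeas _) (fun ω => ((hgcont ω).tendsto x₀).comp hφtend)
    refine le_trans hlim ?_
    have hb : ∀ n, G (xs (φ n)) ≤ I + ((n : ℝ≥0∞) + 1)⁻¹ := by
      intro n
      refine le_trans (hxslt (φ n)).le ?_
      have hmono : ((n : ℝ≥0∞) + 1)⁻¹ ≥ ((φ n : ℝ≥0∞) + 1)⁻¹ := by
        apply ENNReal.inv_le_inv.mpr
        have : (n : ℝ≥0∞) ≤ (φ n : ℝ≥0∞) := by exact_mod_cast hφmono.le_apply
        exact add_le_add this le_rfl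
      exact add_le_add le_rfl hmono
    calc liminf (fun n => G (xs (φ n))) atTop
        ≤ liminf (fun n : ℕ => I + ((n : ℝ≥0∞) + 1)⁻¹) atTop :=
          liminf_le_liminf (Eventually.of_forall hb)
      _ = I := by
          refine Tendsto.liminf_eq ?_
          have h1 : Tendsto (fun n : ℕ => ((n : ℝ≥0∞) + 1)⁻¹) atTop (𝓝 0) := by
            have h := ENNReal.tendsto_inv_nat_nhds_zero.comp (tendsto_add_atTop_nat 1)
            refine h.congr fun n => ?_
            simp [Function.comp]
          have := tendsto_const_nhds.add h1 (f := fun _ : ℕ => I) (x := atTop)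
          simpa using this
  have hGmin : ∀ x ∈ KK, G x₀ ≤ G x := fun x hx => le_trans hGx₀ (sInf_le ⟨x, hx, rfl⟩)
  refine ⟨x₀, hx₀K.1, ?_, ?_⟩
  · show ⊥ < F x₀
    rw [hFeq]
    have hne : G x₀ ≠ ⊤ := (lt_of_le_of_lt (le_trans hGx₀ hIle)
      (lt_top_iff_ne_top.mpr hGx₁)).ne
    rw [coe_ennreal_eq_coe_toReal hne, ← EReal.coe_sub]
    exact EReal.bot_lt_coe _
  · intro x hxD
    show F x ≤ F x₀
    by_cases hxR : ‖x‖ ≤ R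
    · have hxK : x ∈ KK := ⟨hxD, by rw [Metric.mem_closedBall, dist_zero_right]; exact hxR⟩
      rw [hFeq, hFeq]
      exact EReal.sub_le_sub le_rfl
        (EReal.coe_ennreal_le_coe_ennreal_iff.mpr (hGmin x hxK))
    · have hxt : t₀ ≤ ‖x‖ :=
        le_trans (le_max_left _ _) (le_of_not_ge hxR)
      have h := hcoer x hxt
      have h1 : F x ≤ F x₁ := by
        rw [hFeq, hFeq]
        exact EReal.sub_le_sub le_rfl (EReal.coe_ennreal_le_coe_ennreal_iff.mpr h.le)
      have h2 : F x₁ ≤ F x₀ := by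
        rw [hFeq, hFeq]
        exact EReal.sub_le_sub le_rfl
          (EReal.coe_ennreal_le_coe_ennreal_iff.mpr (hGmin x₁ hx₁K))
      exact le_trans h1 h2


end
end

section
/- Assume U satisfies Assumption 1 and P(Z > 0) > 0, with Z nonnegative and finite-valued. Then the problem max_{x∈ℝ^d} E[U(W(x))] is well-posed: there exists a portfolio x⋆ ∈ ℝ^d with finite Euclidean norm such that E[U(W(x))] ≤ E[U(W(x⋆))] < +∞ for all x ∈ ℝ^d. -/
open MeasureTheory ProbabilityTheory Filter Matrix
open scoped ENNReal NNReal Topology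

noncomputable section

instance gaussianReal_isOpenPosMeasure : (gaussianReal 0 1).IsOpenPosMeasure := by
  constructor
  intro U hU hUne h0
  exact hU.measure_ne_zero volume hUne ((gaussianReal_absolutelyContinuous' 0 one_ne_zero) h0)

/-- under Assumption 1 and `P(Z > 0) > 0` (with `Z` nonnegative and
finite-valued), the problem `max_x E[U(W(x))]` is well-posed: there is a portfolio `x⋆`
of finite Euclidean norm with `E[U(W(x))] ≤ E[U(W(x⋆))] < +∞` for all `x`. -/
theorem stmt19 {Ω : Type*} [MeasurableSpace Ω] (P : Measure Ω) [IsProbabilityMeasure P]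
    {d : ℕ} (μ γ : Fin d → ℝ) (A : Matrix (Fin d) (Fin d) ℝ)
    (Z : Ω → ℝ) (N : Ω → Fin d → ℝ)
    (hZmeas : Measurable Z) (hNmeas : Measurable N)
    (hZnonneg : ∀ ω, 0 ≤ Z ω)
    (hZposprob : 0 < P {ω | 0 < Z ω})
    (hNlaw : Measure.map N P = Measure.pi fun _ : Fin d => gaussianReal 0 1)
    (hindep : IndepFun Z N P)
    (hPD : (A * Aᵀ).PosDef)
    (rf W0 : ℝ) (hW0 : 0 < W0)
    (hμrf : (fun i => μ i - rf) ≠ 0)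
    -- Assumption 1
    (U : ℝ → ℝ) (hUcont : Continuous U) (hUmono : Monotone U)
    (hUnonconst : ∃ w w' : ℝ, U w ≠ U w') (hUbdd : BddAbove (Set.range U))
    (hUbot : Tendsto U atBot atBot) :
    ∃ xstar : Fin d → ℝ,
      (eexp P fun ω => U (wealth μ γ A Z N rf W0 xstar ω)) < ⊤ ∧
      ∀ x : Fin d → ℝ,
        (eexp P fun ω => U (wealth μ γ A Z N rf W0 x ω)) ≤
          eexp P fun ω => U (wealth μ γ A Z N rf W0 xstar ω) := by
  classical
  -- basic notation
  set M : ℝ := max (sSup (Set.range U)) 0 with hMdef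
  have hUM : ∀ w, U w ≤ M := fun w => le_max_of_le_left (le_csSup hUbdd ⟨w, rfl⟩)
  have hM0 : (0:ℝ) ≤ M := le_max_right _ _
  set c0 : ℝ := W0 * (1 + rf) with hc0def
  set Y : Fin d → Ω → ℝ := fun i ω => nmvmX μ γ A Z N ω i - rf with hYdef
  set S : (Fin d → ℝ) → Ω → ℝ := fun u ω => ∑ i, u i * Y i ω with hSdef
  have hwealth : ∀ x ω, wealth μ γ A Z N rf W0 x ω = c0 + W0 * S x ω := fun _ _ => rfl
  set f : (Fin d → ℝ) → Ω → ℝ := fun x ω => U (c0 + W0 * S x ω) with hfdef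
  set g : (Fin d → ℝ) → Ω → ℝ≥0∞ := fun x ω => ENNReal.ofReal (M - f x ω) with hgdef
  set h : (Fin d → ℝ) → ℝ≥0∞ := fun x => ∫⁻ ω, g x ω ∂P with hhdef
  -- measurability
  have hYmeas : ∀ i, Measurable (Y i) := by
    intro i
    apply Measurable.sub _ measurable_const
    apply Measurable.add
    · exact (measurable_const.add (measurable_const.mul hZmeas))
    · refine (Real.continuous_sqrt.measurable.comp hZmeas).mul ?_
      have : (fun ω => (A *ᵥ N ω) i) = fun ω => ∑ j, A i j * N ω j := by
        funext ω; rfl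
      rw [this]
      exact Finset.measurable_sum _ fun j _ =>
        measurable_const.mul ((measurable_pi_apply j).comp hNmeas)
  have hSmeas : ∀ u, Measurable (S u) := fun u =>
    Finset.measurable_sum _ fun i _ => measurable_const.mul (hYmeas i)
  have hfmeas : ∀ x, Measurable (f x) := fun x =>
    hUcont.measurable.comp (measurable_const.add (measurable_const.mul (hSmeas x)))
  have hgmeas : ∀ x, Measurable (g x) := fun x =>
    ENNReal.measurable_ofReal.comp (measurable_const.sub (hfmeas x))
  -- continuity in the portfolio variable
  have hScont : ∀ ω, Continuous (fun u => S u ω) := fun ω =>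
    continuous_finset_sum _ fun i _ => (continuous_apply i).mul continuous_const
  have hgcont : ∀ ω, Continuous (fun x => g x ω) := fun ω =>
    ENNReal.continuous_ofReal.comp (continuous_const.sub
      (hUcont.comp (continuous_const.add (continuous_const.mul (hScont ω)))))
  -- value at 0
  have hS0 : ∀ ω, S 0 ω = 0 := by intro ω; simp [hSdef]
  have hh0top : h 0 < ⊤ := by
    have : h 0 = ENNReal.ofReal (M - U c0) := by
      simp only [hhdef, hgdef, hfdef, hS0]
      rw [lintegral_const]
      simp
    rw [this]; exact ENNReal.ofReal_lt_top
  -- KEY 1: positivity of downside probabilities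
  have hpos : ∀ u : Fin d → ℝ, u ≠ 0 → ∀ c : ℝ, 0 < P {ω | S u ω < c} := by
    intro u hu c
    set av : ℝ := ∑ i, u i * (μ i - rf) with havdef
    set cg : ℝ := ∑ i, u i * γ i with hcgdef
    set bb : Fin d → ℝ := Aᵀ *ᵥ u with hbbdef
    have hbb : bb ≠ 0 := by
      intro hb0
      have hq := hPD.dotProduct_mulVec_pos hu
      rw [show star u = u from rfl] at hq
      rw [← Matrix.mulVec_mulVec, Matrix.dotProduct_mulVec, ← Matrix.mulVec_transpose,
        ← hbbdef, hb0] at hq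
      simp at hq
    have hdot : ∀ v : Fin d → ℝ, (∑ i, u i * (A *ᵥ v) i) = ∑ j, bb j * v j := by
      intro v
      calc (∑ i, u i * (A *ᵥ v) i) = u ⬝ᵥ (A *ᵥ v) := rfl
      _ = (u ᵥ* A) ⬝ᵥ v := Matrix.dotProduct_mulVec u A v
      _ = bb ⬝ᵥ v := by rw [hbbdef, Matrix.mulVec_transpose]
      _ = ∑ j, bb j * v j := rfl
    have hSdecomp : ∀ ω, S u ω =
        av + cg * Z ω + Real.sqrt (Z ω) * (∑ j, bb j * N ω j) := by
      intro ω
      have expand : ∀ i, u i * Y i ω =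
          u i * (μ i - rf) + u i * γ i * Z ω +
            Real.sqrt (Z ω) * (u i * (A *ᵥ N ω) i) := by
        intro i
        simp only [hYdef, nmvmX]
        ring
      calc S u ω = ∑ i, (u i * (μ i - rf) + u i * γ i * Z ω +
          Real.sqrt (Z ω) * (u i * (A *ᵥ N ω) i)) := Finset.sum_congr rfl fun i _ => expand i
      _ = (∑ i, (u i * (μ i - rf) + u i * γ i * Z ω)) +
            ∑ i, Real.sqrt (Z ω) * (u i * (A *ᵥ N ω) i) := Finset.sum_add_distrib
      _ = ((∑ i, u i * (μ i - rf)) + ∑ i, u i * γ i * Z ω) +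
            Real.sqrt (Z ω) * ∑ i, u i * (A *ᵥ N ω) i := by
            rw [Finset.sum_add_distrib, Finset.mul_sum]
      _ = av + cg * Z ω + Real.sqrt (Z ω) * (∑ j, bb j * N ω j) := by
            rw [← havdef, ← Finset.sum_mul, ← hcgdef, hdot]
    -- choose a slab for Z with positive probability
    have hslab : ∃ n : ℕ, 0 < P (Z ⁻¹' Set.Icc (1/(n+1) : ℝ) ((n:ℝ)+1)) := by
      by_contra hcon
      push_neg at hcon
      have hzero : ∀ n : ℕ, P (Z ⁻¹' Set.Icc (1/(n+1) : ℝ) ((n:ℝ)+1)) = 0 :=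
        fun n => le_antisymm (hcon n) zero_le
      have hsub : {ω | 0 < Z ω} ⊆ ⋃ n : ℕ, Z ⁻¹' Set.Icc (1/(n+1) : ℝ) ((n:ℝ)+1) := by
        intro ω hω
        have hz : 0 < Z ω := hω
        obtain ⟨n, hn⟩ := exists_nat_ge (max (Z ω) (1 / Z ω))
        have hn1 : Z ω ≤ (n:ℝ) := le_trans (le_max_left _ _) hn
        have hn2 : 1 / Z ω ≤ (n:ℝ) + 1 :=
          le_trans (le_trans (le_max_right _ _) hn) (by linarith)
        rw [div_le_iff₀ hz] at hn2
        refine Set.mem_iUnion.2 ⟨n, ?_, ?_⟩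
        · rw [div_le_iff₀ (by positivity : (0:ℝ) < (n:ℝ)+1)]
          nlinarith
        · exact le_trans hn1 (by linarith)
      have hmono := measure_mono (μ := P) hsub
      have hU0 : P (⋃ n : ℕ, Z ⁻¹' Set.Icc (1/(n+1) : ℝ) ((n:ℝ)+1)) = 0 :=
        measure_iUnion_null fun n => hzero n
      rw [hU0] at hmono
      exact absurd (le_antisymm hmono zero_le) hZposprob.ne'
    obtain ⟨n0, hslab0⟩ := hslab
    set ε : ℝ := 1/(n0+1) with hεdef
    set K : ℝ := (n0:ℝ)+1 with hKdef
    have hε : 0 < ε := by positivity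
    set T : ℝ := (|av| + |cg| * K + |c| + 1) / Real.sqrt ε with hTdef
    have hsqε : 0 < Real.sqrt ε := Real.sqrt_pos.2 hε
    have hT0 : 0 ≤ T := by
      apply div_nonneg _ hsqε.le
      positivity
    set Bset : Set (Fin d → ℝ) := {v | (∑ j, bb j * v j) < -T} with hBdef
    have hBopen : IsOpen Bset :=
      isOpen_lt (continuous_finset_sum _ fun j _ => continuous_const.mul (continuous_apply j))
        continuous_const
    have hBne : Bset.Nonempty := by
      obtain ⟨j0, hj0⟩ := Function.ne_iff.1 hbb
      set v0 : Fin d → ℝ := Pi.single j0 ((-T-1)/bb j0) with hv0def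
      refine ⟨v0, ?_⟩
      have hsum : (∑ j, bb j * v0 j) = -T-1 := by
        simp only [hv0def]
        rw [Finset.sum_eq_single j0]
        · rw [Pi.single_eq_same, mul_div_cancel₀ _ hj0]
        · intro j _ hj
          rw [Pi.single_eq_of_ne hj, mul_zero]
        · intro hj; exact absurd (Finset.mem_univ j0) hj
      show (∑ j, bb j * v0 j) < -T
      rw [hsum]; linarith
    have hBpos : 0 < Measure.pi (fun _ : Fin d => gaussianReal 0 1) Bset :=
      hBopen.measure_pos _ hBne
    have hNB : P (N ⁻¹' Bset) = Measure.pi (fun _ : Fin d => gaussianReal 0 1) Bset := by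
      rw [← hNlaw, Measure.map_apply hNmeas hBopen.measurableSet]
    have hinter : 0 < P (Z ⁻¹' Set.Icc ε K ∩ N ⁻¹' Bset) := by
      rw [hindep.measure_inter_preimage_eq_mul _ _ measurableSet_Icc hBopen.measurableSet]
      exact ENNReal.mul_pos hslab0.ne' (hNB ▸ hBpos).ne'
    refine lt_of_lt_of_le hinter (measure_mono ?_)
    rintro ω ⟨hzmem, hB⟩
    obtain ⟨hz1, hz2⟩ := hzmem
    have hBω : (∑ j, bb j * N ω j) < -T := hB
    rw [Set.mem_setOf_eq, hSdecomp ω]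
    have hsq : Real.sqrt ε ≤ Real.sqrt (Z ω) := Real.sqrt_le_sqrt hz1
    have h1 : Real.sqrt (Z ω) * (∑ j, bb j * N ω j) ≤
        Real.sqrt ε * (∑ j, bb j * N ω j) :=
      mul_le_mul_of_nonpos_right hsq (by linarith)
    have h2 : Real.sqrt ε * (∑ j, bb j * N ω j) < Real.sqrt ε * (-T) :=
      mul_lt_mul_of_pos_left hBω hsqε
    have h3 : Real.sqrt ε * T = |av| + |cg| * K + |c| + 1 := by
      rw [hTdef, mul_div_cancel₀ _ hsqε.ne']
    have h4 : cg * Z ω ≤ |cg| * K := by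
      calc cg * Z ω ≤ |cg * Z ω| := le_abs_self _
      _ = |cg| * |Z ω| := abs_mul _ _
      _ = |cg| * Z ω := by rw [abs_of_nonneg (hZnonneg ω)]
      _ ≤ |cg| * K := mul_le_mul_of_nonneg_left hz2 (abs_nonneg _)
    have h5 : av ≤ |av| := le_abs_self _
    have h6 : -|c| ≤ c := neg_abs_le c
    have h7 : Real.sqrt ε * (-T) = -(|av| + |cg| * K + |c| + 1) := by
      rw [mul_neg, h3]
    linarith
  -- KEY 2: coercivity
  have hcoerc : ∃ R : ℝ, 1 ≤ R ∧ ∀ x : Fin d → ℝ, R ≤ ‖x‖ → h 0 < h x := by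
    by_contra hcon
    push_neg at hcon
    have hseq : ∀ n : ℕ, ∃ x : Fin d → ℝ, ((n:ℝ)+1) ≤ ‖x‖ ∧ h x ≤ h 0 := by
      intro n
      obtain ⟨x, hx1, hx2⟩ := hcon ((n:ℝ)+1) (by linarith [Nat.cast_nonneg (α := ℝ) n])
      exact ⟨x, hx1, hx2⟩
    choose xs hxs1 hxs2 using hseq
    have hxpos : ∀ n, (0:ℝ) < ‖xs n‖ := by
      intro n
      have := hxs1 n
      have : (0:ℝ) < (n:ℝ)+1 := by positivity
      linarith [hxs1 n]
    have hxne : ∀ n, xs n ≠ 0 := fun n h0 => by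
      have := hxpos n; rw [h0, norm_zero] at this; exact lt_irrefl _ this
    set us : ℕ → (Fin d → ℝ) := fun n => ‖xs n‖⁻¹ • xs n with husdef
    have husnorm : ∀ n, ‖us n‖ = 1 := fun n => norm_smul_inv_norm (hxne n)
    have husmem : ∀ n, us n ∈ Metric.sphere (0 : Fin d → ℝ) 1 := by
      intro n; rw [mem_sphere_zero_iff_norm]; exact husnorm n
    obtain ⟨ustar, hustar_mem, φ, hφmono, hφtends⟩ :=
      (isCompact_sphere (0 : Fin d → ℝ) 1).tendsto_subseq husmem
    have hustar_ne : ustar ≠ 0 := by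
      intro h0
      have := mem_sphere_zero_iff_norm.1 hustar_mem
      rw [h0, norm_zero] at this
      exact one_ne_zero this.symm
    set q : ℝ≥0∞ := P {ω | S ustar ω < -2} with hqdef
    have hq : 0 < q := hpos ustar hustar_ne (-2)
    have hq1 : q ≤ 1 := prob_le_one
    set E : ℕ → Set Ω := fun n => {ω | S (us (φ n)) ω < -1} with hEdef
    have hEmeas : ∀ n, MeasurableSet (E n) :=
      fun n => measurableSet_lt (hSmeas _) measurable_const
    have hfatou : q ≤ liminf (fun n => P (E n)) atTop := by
      have hpt : ∀ ω, ({ω | S ustar ω < -2}).indicator (fun _ => (1:ℝ≥0∞)) ω ≤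
          liminf (fun n => (E n).indicator (fun _ => (1:ℝ≥0∞)) ω) atTop := by
        intro ω
        by_cases hω : ω ∈ {ω | S ustar ω < -2}
        · rw [Set.indicator_of_mem hω]
          have htend : Tendsto (fun n => S (us (φ n)) ω) atTop (𝓝 (S ustar ω)) :=
            ((hScont ω).tendsto ustar).comp hφtends
          have hlt : S ustar ω < -1 := lt_trans hω (by norm_num)
          have hev : ∀ᶠ n in atTop, S (us (φ n)) ω < -1 :=
            htend.eventually (eventually_lt_nhds hlt)
          refine le_liminf_of_le (by isBoundedDefault) ?_
          refine hev.mono fun n hn => ?_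
          rw [Set.indicator_of_mem (show ω ∈ E n from hn)]
        · rw [Set.indicator_of_notMem hω]; exact zero_le
      calc q = ∫⁻ ω, ({ω | S ustar ω < -2}).indicator (fun _ => (1:ℝ≥0∞)) ω ∂P := by
            rw [lintegral_indicator_const (measurableSet_lt (hSmeas _) measurable_const),
              one_mul]
      _ ≤ ∫⁻ ω, liminf (fun n => (E n).indicator (fun _ => (1:ℝ≥0∞)) ω) atTop ∂P :=
            lintegral_mono hpt
      _ ≤ liminf (fun n => ∫⁻ ω, (E n).indicator (fun _ => (1:ℝ≥0∞)) ω ∂P) atTop :=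
            lintegral_liminf_le fun n => (measurable_const.indicator (hEmeas n))
      _ = liminf (fun n => P (E n)) atTop := by
            congr 1; funext n; rw [lintegral_indicator_const (hEmeas n), one_mul]
    set κ : ℕ → ℝ≥0∞ := fun n => ENNReal.ofReal (M - U (c0 - W0 * ‖xs (φ n)‖)) with hκdef
    have hlow : ∀ n, κ n * P (E n) ≤ h (xs (φ n)) := by
      intro n
      have hpt : ∀ ω, (E n).indicator (fun _ => κ n) ω ≤ g (xs (φ n)) ω := by
        intro ω
        by_cases hω : ω ∈ E n
        · rw [Set.indicator_of_mem hω]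
          have hSω : S (us (φ n)) ω < -1 := hω
          have ht : (0:ℝ) < ‖xs (φ n)‖ := hxpos (φ n)
          have hxu : ∀ i, xs (φ n) i = ‖xs (φ n)‖ * us (φ n) i := by
            intro i
            simp only [husdef, Pi.smul_apply, smul_eq_mul]
            field_simp
          have hSx : S (xs (φ n)) ω = ‖xs (φ n)‖ * S (us (φ n)) ω := by
            simp only [hSdef]
            rw [Finset.mul_sum]
            exact Finset.sum_congr rfl fun i _ => by rw [hxu i]; ring
          have hW : c0 + W0 * S (xs (φ n)) ω ≤ c0 - W0 * ‖xs (φ n)‖ := by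
            rw [hSx]; nlinarith [mul_le_mul_of_nonneg_left hSω.le ht.le, mul_pos hW0 ht]
          have hfU : f (xs (φ n)) ω ≤ U (c0 - W0 * ‖xs (φ n)‖) := hUmono hW
          simp only [hκdef, hgdef]
          exact ENNReal.ofReal_le_ofReal (by linarith)
        · rw [Set.indicator_of_notMem hω]; exact zero_le
      calc κ n * P (E n) = ∫⁻ ω, (E n).indicator (fun _ => κ n) ω ∂P :=
            (lintegral_indicator_const (hEmeas n) _).symm
      _ ≤ ∫⁻ ω, g (xs (φ n)) ω ∂P := lintegral_mono hpt
      _ = h (xs (φ n)) := rfl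
    have hq2ne : (q/2 : ℝ≥0∞) ≠ 0 := by
      simp only [ne_eq, ENNReal.div_eq_zero_iff]
      push_neg
      exact ⟨hq.ne', by norm_num⟩
    have hqtop : q ≠ ⊤ := (lt_of_le_of_lt hq1 ENNReal.one_lt_top).ne
    have hq2top : (q/2 : ℝ≥0∞) ≠ ⊤ := by
      exact (ENNReal.div_lt_top hqtop (by norm_num)).ne
    have hq2lt : q/2 < q := ENNReal.half_lt_self hq.ne' hqtop
    have hev1 : ∀ᶠ n in atTop, q/2 < P (E n) :=
      eventually_lt_of_lt_liminf (lt_of_lt_of_le hq2lt hfatou)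
    have hκtend : Tendsto κ atTop (𝓝 ⊤) := by
      have h1 : Tendsto (fun n : ℕ => ‖xs (φ n)‖) atTop atTop := by
        apply tendsto_atTop_mono (fun n => ?_)
          (tendsto_atTop_add_const_right atTop (1:ℝ) tendsto_natCast_atTop_atTop)
        calc ((n:ℝ)+1) ≤ ((φ n : ℝ)+1) := by
              have hle : n ≤ φ n := hφmono.le_apply
              exact add_le_add_left (by exact_mod_cast hle) 1
        _ ≤ ‖xs (φ n)‖ := hxs1 (φ n)
      have h2 : Tendsto (fun n : ℕ => c0 - W0 * ‖xs (φ n)‖) atTop atBot := by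
        have hmul : Tendsto (fun n : ℕ => W0 * ‖xs (φ n)‖) atTop atTop :=
          h1.const_mul_atTop hW0
        have hneg : Tendsto (fun n : ℕ => -(W0 * ‖xs (φ n)‖)) atTop atBot :=
          tendsto_neg_atTop_atBot.comp hmul
        have := tendsto_atBot_add_const_left atTop c0 hneg
        simpa [sub_eq_add_neg] using this
      have h3 : Tendsto (fun n : ℕ => U (c0 - W0 * ‖xs (φ n)‖)) atTop atBot :=
        hUbot.comp h2
      have h4 : Tendsto (fun n : ℕ => M - U (c0 - W0 * ‖xs (φ n)‖)) atTop atTop := by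
        have hneg := tendsto_neg_atBot_atTop.comp h3
        have := tendsto_atTop_add_const_left atTop M hneg
        simpa [sub_eq_add_neg] using this
      exact ENNReal.tendsto_ofReal_atTop.comp h4
    have hdiv_lt_top : h 0 / (q/2) < ⊤ := ENNReal.div_lt_top hh0top.ne hq2ne
    have hev2 : ∀ᶠ n in atTop, h 0 / (q/2) < κ n :=
      hκtend.eventually (eventually_gt_nhds hdiv_lt_top)
    obtain ⟨n, hn1, hn2⟩ := (hev1.and hev2).exists
    have hlt : h 0 < κ n * (q/2) :=
      (ENNReal.div_lt_iff (Or.inl hq2ne) (Or.inl hq2top)).1 hn2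
    have hchain : κ n * (q/2) ≤ h 0 := by
      calc κ n * (q/2) ≤ κ n * P (E n) :=
            mul_le_mul_right hn1.le _
      _ ≤ h (xs (φ n)) := hlow n
      _ ≤ h 0 := hxs2 (φ n)
    exact absurd (lt_of_lt_of_le hlt hchain) (lt_irrefl _)
  -- KEY 3: existence of a minimizer of h
  obtain ⟨xstar, hmin⟩ : ∃ xstar : Fin d → ℝ, ∀ x, h xstar ≤ h x := by
    obtain ⟨R, hR1, hR⟩ := hcoerc
    set ball : Set (Fin d → ℝ) := Metric.closedBall 0 R with hballdef
    have h0mem : (0 : Fin d → ℝ) ∈ ball := by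
      simp only [hballdef, Metric.mem_closedBall, dist_zero_right, norm_zero]
      linarith
    set m : ℝ≥0∞ := ⨅ (x : Fin d → ℝ) (_ : x ∈ ball), h x with hmdef
    have hmle : ∀ x ∈ ball, m ≤ h x := fun x hx => iInf₂_le x hx
    have hmtop : m ≠ ⊤ := (lt_of_le_of_lt (hmle 0 h0mem) hh0top).ne
    have hsel : ∀ n : ℕ, ∃ y, y ∈ ball ∧ h y < m + ((n:ℝ≥0∞))⁻¹ := by
      intro n
      have hlt : m < m + ((n:ℝ≥0∞))⁻¹ :=
        ENNReal.lt_add_right hmtop (ENNReal.inv_ne_zero.2 (ENNReal.natCast_ne_top n))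
      conv_lhs at hlt => rw [hmdef]
      simp only [iInf_lt_iff] at hlt
      obtain ⟨y, hy, hylt⟩ := hlt
      exact ⟨y, hy, hylt⟩
    choose ys hysmem hyslt using hsel
    obtain ⟨xstar, hxmem, φ, hφmono, hφtends⟩ :=
      (isCompact_closedBall (0 : Fin d → ℝ) R).tendsto_subseq hysmem
    have hfatou : h xstar ≤ liminf (fun n => h (ys (φ n))) atTop := by
      have hpt : ∀ ω, g xstar ω ≤ liminf (fun n => g (ys (φ n)) ω) atTop := by
        intro ω
        have htend : Tendsto (fun n => g (ys (φ n)) ω) atTop (𝓝 (g xstar ω)) :=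
          ((hgcont ω).tendsto xstar).comp hφtends
        exact htend.liminf_eq.symm.le
      calc h xstar = ∫⁻ ω, g xstar ω ∂P := rfl
      _ ≤ ∫⁻ ω, liminf (fun n => g (ys (φ n)) ω) atTop ∂P := lintegral_mono hpt
      _ ≤ liminf (fun n => h (ys (φ n))) atTop := lintegral_liminf_le fun n => hgmeas _
    have hlim : liminf (fun n => h (ys (φ n))) atTop ≤ m := by
      have htends : Tendsto (fun n : ℕ => m + (((φ n : ℕ)) : ℝ≥0∞)⁻¹) atTop (𝓝 m) := by
        have h0 : Tendsto (fun n : ℕ => (((φ n : ℕ)) : ℝ≥0∞)⁻¹) atTop (𝓝 0) :=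
          ENNReal.tendsto_inv_nat_nhds_zero.comp hφmono.tendsto_atTop
        simpa using tendsto_const_nhds.add h0
      calc liminf (fun n => h (ys (φ n))) atTop
          ≤ liminf (fun n : ℕ => m + (((φ n : ℕ)) : ℝ≥0∞)⁻¹) atTop :=
            liminf_le_liminf (Eventually.of_forall fun n => (hyslt (φ n)).le)
      _ = m := htends.liminf_eq
    refine ⟨xstar, fun x => ?_⟩
    by_cases hx : x ∈ ball
    · exact le_trans (hfatou.trans hlim) (hmle x hx)
    · have hnorm : R ≤ ‖x‖ := by
        simp only [hballdef, Metric.mem_closedBall, dist_zero_right, not_le] at hx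
        exact hx.le
      exact le_trans (hfatou.trans hlim) (le_trans (hmle 0 h0mem) (hR x hnorm).le)
  -- bridge from h to eexp
  set C : ℝ≥0∞ := ENNReal.ofReal M with hCdef
  set a : (Fin d → ℝ) → ℝ≥0∞ := fun x => ∫⁻ ω, ENNReal.ofReal (f x ω) ∂P with hadef
  set b : (Fin d → ℝ) → ℝ≥0∞ := fun x => ∫⁻ ω, ENNReal.ofReal (-(f x ω)) ∂P with hbdef
  have hCtop : C < ⊤ := ENNReal.ofReal_lt_top
  have haC : ∀ x, a x ≤ C := by
    intro x
    calc a x ≤ ∫⁻ _, C ∂P := lintegral_mono fun ω =>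
          ENNReal.ofReal_le_ofReal (hUM _)
    _ = C := by simp
  have hsplit : ∀ x, h x = (C - a x) + b x := by
    intro x
    have hpt : ∀ ω, g x ω = (C - ENNReal.ofReal (f x ω)) + ENNReal.ofReal (-(f x ω)) := by
      intro ω
      simp only [hgdef, hCdef]
      rcases le_or_gt 0 (f x ω) with hf0 | hf0
      · rw [ENNReal.ofReal_sub _ hf0, ENNReal.ofReal_eq_zero.2 (by linarith : -(f x ω) ≤ 0),
          add_zero]
      · rw [ENNReal.ofReal_eq_zero.2 hf0.le, tsub_zero,
          show M - f x ω = M + -(f x ω) by ring,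
          ENNReal.ofReal_add hM0 (by linarith)]
    have : h x = ∫⁻ ω, ((C - ENNReal.ofReal (f x ω)) + ENNReal.ofReal (-(f x ω))) ∂P := by
      simp only [hhdef]; exact lintegral_congr hpt
    rw [this, lintegral_add_right (g := fun ω => ENNReal.ofReal (-(f x ω))) _ ((hfmeas x).neg.ennreal_ofReal),
      lintegral_sub ((hfmeas x).ennreal_ofReal) (by
        exact ne_top_of_le_ne_top hCtop.ne (haC x)) (ae_of_all _ fun ω =>
          ENNReal.ofReal_le_ofReal (hUM _))]
    simp [hadef, hbdef]
    rfl
  have heexp : ∀ x, (eexp P fun ω => U (wealth μ γ A Z N rf W0 x ω)) =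
      ((a x : EReal)) - ((b x : EReal)) := by
    intro x
    simp only [eexp, hadef, hbdef, hfdef]
    rfl
  -- comparison
  have hcomp : ∀ x, (((a x : EReal)) - ((b x : EReal))) ≤ ((a xstar : EReal)) - b xstar := by
    intro x
    rcases eq_or_ne (b x) ⊤ with hbx | hbx
    · rw [hbx, EReal.coe_ennreal_top, EReal.sub_top]; exact bot_le
    · have hhx : h x < ⊤ := by
        rw [hsplit x]
        exact ENNReal.add_lt_top.2 ⟨lt_of_le_of_lt (tsub_le_self) hCtop, hbx.lt_top⟩
      have hhxs : h xstar < ⊤ := lt_of_le_of_lt (hmin x) hhx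
      have hbxs : b xstar < ⊤ := by
        refine lt_of_le_of_lt ?_ hhxs
        rw [hsplit xstar]; exact le_add_self
      -- pass to reals
      have hax := haC x
      have haxs := haC xstar
      have key : (C - a xstar) + b xstar ≤ (C - a x) + b x := by
        rw [← hsplit, ← hsplit]; exact hmin x
      have hCt : C ≠ ⊤ := hCtop.ne
      have h1 : C.toReal - (a xstar).toReal + (b xstar).toReal ≤
          C.toReal - (a x).toReal + (b x).toReal := by
        have e1 : ((C - a xstar) + b xstar).toReal =
            C.toReal - (a xstar).toReal + (b xstar).toReal := by
          rw [ENNReal.toReal_add (by simp [ENNReal.sub_ne_top hCt]) hbxs.ne,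
            ENNReal.toReal_sub_of_le haxs hCt]
        have e2 : ((C - a x) + b x).toReal =
            C.toReal - (a x).toReal + (b x).toReal := by
          rw [ENNReal.toReal_add (by simp [ENNReal.sub_ne_top hCt]) hbx,
            ENNReal.toReal_sub_of_le hax hCt]
        rw [← e1, ← e2]
        exact ENNReal.toReal_mono (by
          exact ENNReal.add_ne_top.2 ⟨by simp [ENNReal.sub_ne_top hCt], hbx⟩) key
      have h2 : (a x).toReal - (b x).toReal ≤ (a xstar).toReal - (b xstar).toReal := by
        linarith
      have hc : ∀ (y : ℝ≥0∞), y ≠ ⊤ → ((y : EReal)) = ((y.toReal : ℝ) : EReal) := by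
        intro y hy
        calc (y : EReal) = ((ENNReal.ofReal y.toReal : ℝ≥0∞) : EReal) := by
              rw [ENNReal.ofReal_toReal hy]
        _ = ((max y.toReal 0 : ℝ) : EReal) := EReal.coe_ennreal_ofReal
        _ = ((y.toReal : ℝ) : EReal) := by rw [max_eq_left ENNReal.toReal_nonneg]
      rw [hc (a x) (ne_top_of_le_ne_top hCt hax), hc (b x) hbx,
        hc (a xstar) (ne_top_of_le_ne_top hCt haxs), hc (b xstar) hbxs.ne,
        ← EReal.coe_sub, ← EReal.coe_sub]
      exact_mod_cast h2
  refine ⟨xstar, ?_, ?_⟩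
  · rw [heexp xstar]
    rcases eq_or_ne (b xstar) ⊤ with hbx | hbx
    · rw [hbx, EReal.coe_ennreal_top, EReal.sub_top]; exact bot_lt_top
    · have hc : ∀ (y : ℝ≥0∞), y ≠ ⊤ → ((y : EReal)) = ((y.toReal : ℝ) : EReal) := by
        intro y hy
        calc (y : EReal) = ((ENNReal.ofReal y.toReal : ℝ≥0∞) : EReal) := by
              rw [ENNReal.ofReal_toReal hy]
        _ = ((max y.toReal 0 : ℝ) : EReal) := EReal.coe_ennreal_ofReal
        _ = ((y.toReal : ℝ) : EReal) := by rw [max_eq_left ENNReal.toReal_nonneg]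
      rw [hc (a xstar) (ne_top_of_le_ne_top hCtop.ne (haC xstar)), hc (b xstar) hbx,
        ← EReal.coe_sub]
      exact EReal.coe_lt_top _
  · intro x
    rw [heexp x, heexp xstar]
    exact hcomp x

end
end
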